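/- arXiv:2107.00574 — 4 statements merged into one kernel-verified Lean document; each statement's English description precedes it below -/
import Mathlib

section
/- Let n be a positive integer, let X be a real symmetric n×n positive semidefinite matrix with all diagonal entries equal to 1, and let λ ∈ [0,1]. Then the matrix λ·f(X) + (1−λ)·I belongs to the trigonometric approximation TA, i.e., there exists a real symmetric n×n positive semidefinite matrix Y with all diagonal entries equal to 1 such that λ·f(X) + (1−λ)·I = f(Y). In other words, TA is star-like with center the identity matrix I. -/
open Real Matrix

namespace TAStar

noncomputable def aCoef (lam : ℝ) : ℕ → ℝ
  | 0 => lam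
  | k + 1 => aCoef lam k * ((2 * (k : ℝ) + 1) ^ 2 - lam ^ 2) / ((2 * (k : ℝ) + 2) * (2 * (k : ℝ) + 3))

variable {lam : ℝ}

lemma aCoef_nonneg (h0 : 0 ≤ lam) (h1 : lam ≤ 1) : ∀ k, 0 ≤ aCoef lam k
  | 0 => h0
  | k + 1 => by
    have hk := aCoef_nonneg h0 h1 k
    have hknn : (0:ℝ) ≤ (k:ℝ) := Nat.cast_nonneg k
    have h2 : (0:ℝ) ≤ (2*(k:ℝ)+1)^2 - lam^2 := by nlinarith
    have h3 : (0:ℝ) < (2*(k:ℝ)+2) * (2*(k:ℝ)+3) := by positivity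
    show 0 ≤ aCoef lam k * ((2 * (k : ℝ) + 1) ^ 2 - lam ^ 2) / ((2 * (k : ℝ) + 2) * (2 * (k : ℝ) + 3))
    positivity

lemma aCoef_succ_le (h0 : 0 ≤ lam) (h1 : lam ≤ 1) (k : ℕ) :
    aCoef lam (k + 1) ≤ aCoef lam k := by
  have hk := aCoef_nonneg h0 h1 k
  have h3 : (0:ℝ) < (2*(k:ℝ)+2) * (2*(k:ℝ)+3) := by positivity
  show aCoef lam k * ((2 * (k : ℝ) + 1) ^ 2 - lam ^ 2) / ((2 * (k : ℝ) + 2) * (2 * (k : ℝ) + 3))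
      ≤ aCoef lam k
  rw [div_le_iff₀ h3]
  nlinarith [sq_nonneg lam, Nat.cast_nonneg (α := ℝ) k]

lemma aCoef_le_one (h0 : 0 ≤ lam) (h1 : lam ≤ 1) (k : ℕ) : aCoef lam k ≤ 1 := by
  induction k with
  | zero => exact h1
  | succ k ih => exact (aCoef_succ_le h0 h1 k).trans ih

lemma summable_poly_geom {q : ℝ} (hq : |q| < 1) :
    Summable (fun k : ℕ => ((2*(k:ℝ)+2)*(2*(k:ℝ)+3)) * q ^ k) := by
  have h0 := summable_pow_mul_geometric_of_norm_lt_one (R := ℝ) 0 (by simpa using hq)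
  have h1 := summable_pow_mul_geometric_of_norm_lt_one (R := ℝ) 1 (by simpa using hq)
  have h2 := summable_pow_mul_geometric_of_norm_lt_one (R := ℝ) 2 (by simpa using hq)
  have := ((h2.mul_left 4).add ((h1.mul_left 10).add (h0.mul_left 6)))
  refine this.congr fun k => ?_
  ring

/-- terms of the series for `sin (lam * arcsin x)` -/
noncomputable def g (lam : ℝ) (k : ℕ) (x : ℝ) : ℝ := aCoef lam k * x ^ (2 * k + 1)
noncomputable def g1 (lam : ℝ) (k : ℕ) (x : ℝ) : ℝ := (2*(k:ℝ)+1) * aCoef lam k * x ^ (2 * k)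
noncomputable def g2 (lam : ℝ) (k : ℕ) (x : ℝ) : ℝ :=
  ((2*(k:ℝ)+1) * (2*(k:ℝ))) * aCoef lam k * x ^ (2 * k - 1)

noncomputable def F (lam x : ℝ) : ℝ := ∑' k, g lam k x
noncomputable def F1 (lam x : ℝ) : ℝ := ∑' k, g1 lam k x
noncomputable def F2 (lam x : ℝ) : ℝ := ∑' k, g2 lam k x

lemma hasDerivAt_g (k : ℕ) (x : ℝ) : HasDerivAt (g lam k) (g1 lam k x) x := by
  have h := (hasDerivAt_pow (2*k+1) x).const_mul (aCoef lam k)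
  simp only [Nat.add_sub_cancel] at h
  refine h.congr_deriv (Eq.symm ?_)
  simp only [g1]
  push_cast
  ring

lemma hasDerivAt_g1 (k : ℕ) (x : ℝ) : HasDerivAt (g1 lam k) (g2 lam k x) x := by
  have h := (hasDerivAt_pow (2*k) x).const_mul ((2*(k:ℝ)+1) * aCoef lam k)
  refine h.congr_deriv (Eq.symm ?_)
  simp only [g2]
  push_cast
  ring

noncomputable def ubnd (r : ℝ) (k : ℕ) : ℝ := ((2*(k:ℝ)+2)*(2*(k:ℝ)+3)) * (r^2) ^ k / r

lemma summable_ubnd {r : ℝ} (hr0 : 0 < r) (hr1 : r < 1) : Summable (ubnd r) := by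
  have : |r^2| < 1 := by rw [abs_of_nonneg (sq_nonneg r)]; nlinarith
  exact (summable_poly_geom this).div_const r

section bounds

variable (h0 : 0 ≤ lam) (h1 : lam ≤ 1)
include h0 h1

lemma g_bound {r : ℝ} (hr0 : 0 < r) (hr1 : r ≤ 1) (k : ℕ) {y : ℝ} (hy : |y| ≤ r) :
    ‖g lam k y‖ ≤ ubnd r k := by
  have hk0 := aCoef_nonneg h0 h1 k
  have hk1 := aCoef_le_one h0 h1 k
  have hyn : |y| ^ (2*k+1) ≤ r ^ (2*k+1) := pow_le_pow_left₀ (abs_nonneg y) hy _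
  have hb : ‖g lam k y‖ ≤ r ^ (2*k+1) := by
    rw [g, norm_mul, norm_pow]
    calc ‖aCoef lam k‖ * ‖y‖ ^ (2*k+1) ≤ 1 * (r ^ (2*k+1)) := by
          apply mul_le_mul _ _ (by positivity) zero_le_one
          · rwa [Real.norm_eq_abs, abs_of_nonneg hk0]
          · simpa [Real.norm_eq_abs] using hyn
      _ = r ^ (2*k+1) := one_mul _
  refine hb.trans ?_
  rw [ubnd, le_div_iff₀ hr0]
  have h2 : r ^ (2*k+1) * r = (r^2) ^ (k+1) := by ring
  rw [h2]
  have h3 : (r^2) ^ (k+1) ≤ (r^2) ^ k := by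
    apply pow_le_pow_of_le_one (sq_nonneg r) (by nlinarith) (by omega)
  calc (r^2) ^ (k+1) ≤ 1 * ((r^2) ^ k) := by simpa using h3
    _ ≤ ((2*(k:ℝ)+2)*(2*(k:ℝ)+3)) * (r^2) ^ k := by
        apply mul_le_mul_of_nonneg_right _ (by positivity)
        nlinarith [Nat.cast_nonneg (α := ℝ) k]

lemma g1_bound {r : ℝ} (hr0 : 0 < r) (hr1 : r ≤ 1) (k : ℕ) {y : ℝ} (hy : |y| ≤ r) :
    ‖g1 lam k y‖ ≤ ubnd r k := by
  have hk0 := aCoef_nonneg h0 h1 k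
  have hk1 := aCoef_le_one h0 h1 k
  have hyn : |y| ^ (2*k) ≤ r ^ (2*k) := pow_le_pow_left₀ (abs_nonneg y) hy _
  have hb : ‖g1 lam k y‖ ≤ (2*(k:ℝ)+1) * r ^ (2*k) := by
    rw [g1, norm_mul, norm_mul, norm_pow]
    have e1 : ‖(2*(k:ℝ)+1)‖ = 2*(k:ℝ)+1 := by
      rw [Real.norm_eq_abs, abs_of_nonneg (by positivity)]
    rw [e1, mul_assoc]
    apply mul_le_mul_of_nonneg_left _ (by positivity)
    calc ‖aCoef lam k‖ * ‖y‖ ^ (2*k) ≤ 1 * (r ^ (2*k)) := by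
          apply mul_le_mul _ _ (by positivity) zero_le_one
          · rwa [Real.norm_eq_abs, abs_of_nonneg hk0]
          · simpa [Real.norm_eq_abs] using hyn
      _ = r ^ (2*k) := one_mul _
  refine hb.trans ?_
  rw [ubnd, le_div_iff₀ hr0]
  have h2 : (2*(k:ℝ)+1) * r ^ (2*k) * r = ((2*(k:ℝ)+1) * r) * (r^2) ^ k := by ring
  rw [h2]
  apply mul_le_mul_of_nonneg_right _ (by positivity)
  nlinarith [Nat.cast_nonneg (α := ℝ) k]

lemma g2_bound {r : ℝ} (hr0 : 0 < r) (hr1 : r ≤ 1) (k : ℕ) {y : ℝ} (hy : |y| ≤ r) :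
    ‖g2 lam k y‖ ≤ ubnd r k := by
  have hk0 := aCoef_nonneg h0 h1 k
  have hk1 := aCoef_le_one h0 h1 k
  have hub : 0 ≤ ubnd r k := by
    rw [ubnd]
    have : (0:ℝ) ≤ (k:ℝ) := Nat.cast_nonneg k
    positivity
  cases k with
  | zero => simpa [g2] using hub
  | succ m =>
    have hyn : |y| ^ (2*(m+1)-1) ≤ r ^ (2*(m+1)-1) := pow_le_pow_left₀ (abs_nonneg y) hy _
    have hb : ‖g2 lam (m+1) y‖ ≤ ((2*((m:ℝ)+1)+1) * (2*((m:ℝ)+1))) * r ^ (2*m+1) := by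
      rw [g2, norm_mul, norm_mul, norm_pow]
      have e1 : ‖(2*((m+1:ℕ):ℝ)+1) * (2*((m+1:ℕ):ℝ))‖ = (2*((m:ℝ)+1)+1) * (2*((m:ℝ)+1)) := by
        rw [Real.norm_eq_abs, abs_of_nonneg (by positivity)]
        push_cast; ring
      have e2 : 2*(m+1)-1 = 2*m+1 := by omega
      rw [e1, e2, mul_assoc]
      apply mul_le_mul_of_nonneg_left _ (by positivity)
      calc ‖aCoef lam (m+1)‖ * ‖y‖ ^ (2*m+1) ≤ 1 * (r ^ (2*m+1)) := by
            apply mul_le_mul _ _ (by positivity) zero_le_one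
            · rwa [Real.norm_eq_abs, abs_of_nonneg hk0]
            · rw [e2] at hyn; simpa [Real.norm_eq_abs] using hyn
        _ = r ^ (2*m+1) := one_mul _
    refine hb.trans ?_
    rw [ubnd, le_div_iff₀ hr0]
    have h2 : ((2*((m:ℝ)+1)+1) * (2*((m:ℝ)+1))) * r ^ (2*m+1) * r
        = ((2*((m:ℝ)+1)+1) * (2*((m:ℝ)+1))) * (r^2) ^ (m+1) := by ring
    rw [h2]
    apply mul_le_mul_of_nonneg_right _ (by positivity)
    push_cast
    nlinarith [Nat.cast_nonneg (α := ℝ) m]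


end bounds

lemma rfacts {x : ℝ} (hx : |x| < 1) :
    0 < (|x|+1)/2 ∧ (|x|+1)/2 < 1 ∧ |x| < (|x|+1)/2 := by
  have := abs_nonneg x
  refine ⟨by linarith, by linarith, by linarith⟩

lemma mem_ball_abs {r y : ℝ} : y ∈ Set.Ioo (-r) r ↔ |y| < r := by
  rw [Set.mem_Ioo, abs_lt]

section deriv

variable (h0 : 0 ≤ lam) (h1 : lam ≤ 1)
include h0 h1

lemma summable_g {x : ℝ} (hx : |x| < 1) : Summable (fun k => g lam k x) := by
  obtain ⟨hr0, hr1, hxr⟩ := rfacts hx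
  exact Summable.of_norm_bounded (summable_ubnd hr0 hr1)
    (fun k => g_bound h0 h1 hr0 hr1.le k hxr.le)

lemma summable_g1 {x : ℝ} (hx : |x| < 1) : Summable (fun k => g1 lam k x) := by
  obtain ⟨hr0, hr1, hxr⟩ := rfacts hx
  exact Summable.of_norm_bounded (summable_ubnd hr0 hr1)
    (fun k => g1_bound h0 h1 hr0 hr1.le k hxr.le)

lemma summable_g2 {x : ℝ} (hx : |x| < 1) : Summable (fun k => g2 lam k x) := by
  obtain ⟨hr0, hr1, hxr⟩ := rfacts hx
  exact Summable.of_norm_bounded (summable_ubnd hr0 hr1)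
    (fun k => g2_bound h0 h1 hr0 hr1.le k hxr.le)

lemma hasDerivAt_F {x : ℝ} (hx : |x| < 1) : HasDerivAt (F lam) (F1 lam x) x := by
  obtain ⟨hr0, hr1, hxr⟩ := rfacts hx
  refine hasDerivAt_tsum_of_isPreconnected (summable_ubnd hr0 hr1) isOpen_Ioo
    (convex_Ioo _ _).isPreconnected (fun k y _ => hasDerivAt_g k y)
    (fun k y hy => g1_bound h0 h1 hr0 hr1.le k (mem_ball_abs.mp hy).le)
    (y₀ := 0) (mem_ball_abs.mpr (by simpa using hr0)) ?_ (mem_ball_abs.mpr hxr)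
  exact summable_g h0 h1 (by norm_num)

lemma hasDerivAt_F1 {x : ℝ} (hx : |x| < 1) : HasDerivAt (F1 lam) (F2 lam x) x := by
  obtain ⟨hr0, hr1, hxr⟩ := rfacts hx
  refine hasDerivAt_tsum_of_isPreconnected (summable_ubnd hr0 hr1) isOpen_Ioo
    (convex_Ioo _ _).isPreconnected (fun k y _ => hasDerivAt_g1 k y)
    (fun k y hy => g2_bound h0 h1 hr0 hr1.le k (mem_ball_abs.mp hy).le)
    (y₀ := 0) (mem_ball_abs.mpr (by simpa using hr0)) ?_ (mem_ball_abs.mpr hxr)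
  exact summable_g1 h0 h1 (by norm_num)

lemma ode {x : ℝ} (hx : |x| < 1) :
    (1 - x^2) * F2 lam x = x * F1 lam x - lam^2 * F lam x := by
  have sg := summable_g h0 h1 hx
  have sg1 := summable_g1 h0 h1 hx
  have sg2 := summable_g2 h0 h1 hx
  -- x^2 * F2 = tsum of t k := A k * ((2k+1)*(2k)) * x^(2k+1)
  have e1 : ∀ k : ℕ, x^2 * g2 lam k x = ((2*(k:ℝ)+1) * (2*(k:ℝ))) * aCoef lam k * x ^ (2*k+1) := by
    intro k
    cases k with
    | zero => simp [g2]
    | succ m =>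
      rw [g2]
      have e2 : 2*(m+1)-1 = 2*m+1 := by omega
      have e3 : 2*(m+1)+1 = (2*m+1)+2 := by omega
      rw [e2, e3]
      ring
  have st : Summable (fun k : ℕ => ((2*(k:ℝ)+1) * (2*(k:ℝ))) * aCoef lam k * x ^ (2*k+1)) := by
    refine ((sg2.mul_left (x^2)).congr e1)
  have hx2 : x^2 * F2 lam x = ∑' k : ℕ, ((2*(k:ℝ)+1) * (2*(k:ℝ))) * aCoef lam k * x ^ (2*k+1) := by
    rw [F2, ← tsum_mul_left]
    exact tsum_congr e1
  have hxF1 : x * F1 lam x = ∑' k : ℕ, (2*(k:ℝ)+1) * aCoef lam k * x ^ (2*k+1) := by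
    rw [F1, ← tsum_mul_left]
    refine tsum_congr fun k => ?_
    rw [g1]; ring
  have hlF : lam^2 * F lam x = ∑' k : ℕ, lam^2 * aCoef lam k * x ^ (2*k+1) := by
    rw [F, ← tsum_mul_left]
    refine tsum_congr fun k => ?_
    rw [g]; ring
  have hF2shift : F2 lam x = ∑' k, g2 lam (k+1) x := by
    rw [F2, sg2.tsum_eq_zero_add]
    simp [g2]
  have key : ∀ k : ℕ, g2 lam (k+1) x
      = ((2*(k:ℝ)+1) * (2*(k:ℝ))) * aCoef lam k * x ^ (2*k+1)
        + (2*(k:ℝ)+1) * aCoef lam k * x ^ (2*k+1) - lam^2 * aCoef lam k * x ^ (2*k+1) := by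
    intro k
    rw [g2]
    have e2 : 2*(k+1)-1 = 2*k+1 := by omega
    rw [e2]
    have hrec : aCoef lam (k+1) = aCoef lam k * ((2 * (k : ℝ) + 1) ^ 2 - lam ^ 2)
        / ((2 * (k : ℝ) + 2) * (2 * (k : ℝ) + 3)) := rfl
    rw [hrec]
    have hne : ((2 * (k : ℝ) + 2) * (2 * (k : ℝ) + 3)) ≠ 0 := by positivity
    field_simp
    push_cast
    ring
  have st1 : Summable (fun k : ℕ => (2*(k:ℝ)+1) * aCoef lam k * x ^ (2*k+1)) :=
    (sg1.mul_left x).congr (fun k => by rw [g1]; ring)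
  have st2 : Summable (fun k : ℕ => lam^2 * aCoef lam k * x ^ (2*k+1)) :=
    (sg.mul_left (lam^2)).congr (fun k => by rw [g]; ring)
  rw [sub_mul, one_mul, hx2, hxF1, hlF, hF2shift]
  rw [tsum_congr key, (st.add st1).tsum_sub st2, st.tsum_add st1]
  ring

end deriv

lemma const_of_hasDerivAt_zero {s : Set ℝ} (hs : Convex ℝ s) (ho : IsOpen s) {f : ℝ → ℝ}
    (hf : ∀ x ∈ s, HasDerivAt f 0 x) {x y : ℝ} (hx : x ∈ s) (hy : y ∈ s) : f x = f y := by
  refine hs.is_const_of_fderivWithin_eq_zero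
    (fun z hz => ((hf z hz).differentiableAt).differentiableWithinAt) (fun z hz => ?_) hx hy
  rw [fderivWithin_of_isOpen ho hz, (hf z hz).hasFDerivAt.fderiv]
  ext u
  simp

lemma F_zero : F lam 0 = 0 := by
  rw [F]
  convert tsum_zero with k
  simp [g]

lemma F1_zero : F1 lam 0 = lam := by
  rw [F1]
  rw [tsum_eq_single 0 (fun k hk => ?_)]
  · simp [g1, aCoef]
  · have : 2 * k ≠ 0 := by omega
    simp [g1, zero_pow this]

section key

variable (h0 : 0 ≤ lam) (h1 : lam ≤ 1)
include h0 h1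

lemma sin_mem {θ : ℝ} (hθ : θ ∈ Set.Ioo (-(π/2)) (π/2)) : |sin θ| < 1 := by
  rw [abs_lt]
  constructor
  · have := Real.strictMonoOn_sin (a := -(π/2)) (b := θ)
      ⟨le_refl _, by linarith [pi_pos]⟩ ⟨hθ.1.le, hθ.2.le⟩ hθ.1
    simpa using this
  · have := Real.strictMonoOn_sin (a := θ) (b := π/2)
      ⟨hθ.1.le, hθ.2.le⟩ ⟨by linarith [pi_pos], le_refl _⟩ hθ.2
    simpa using this

lemma key_identity {θ : ℝ} (hθ : θ ∈ Set.Ioo (-(π/2)) (π/2)) :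
    F lam (sin θ) = sin (lam * θ) := by
  set T : Set ℝ := Set.Ioo (-(π/2)) (π/2) with hT
  have hTo : IsOpen T := isOpen_Ioo
  have hTc : Convex ℝ T := convex_Ioo _ _
  have h0T : (0:ℝ) ∈ T := by
    constructor <;> simp [pi_pos] <;> linarith [pi_pos]
  set h : ℝ → ℝ := fun t => F lam (sin t) - sin (lam * t) with hh
  set H1 : ℝ → ℝ := fun t => F1 lam (sin t) * cos t - lam * cos (lam * t) with hH1
  have dmul : ∀ t : ℝ, HasDerivAt (fun u : ℝ => lam * u) lam t := by
    intro t
    simpa using (hasDerivAt_id t).const_mul lam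
  have dh : ∀ t ∈ T, HasDerivAt h (H1 t) t := by
    intro t ht
    have c1 : HasDerivAt (fun u => F lam (sin u)) (F1 lam (sin t) * cos t) t :=
      (hasDerivAt_F h0 h1 (sin_mem h0 h1 ht)).comp t (Real.hasDerivAt_sin t)
    have c2 : HasDerivAt (fun u => sin (lam * u)) (cos (lam * t) * lam) t :=
      (Real.hasDerivAt_sin (lam * t)).comp t (dmul t)
    have := c1.sub c2
    refine this.congr_deriv (Eq.symm ?_)
    ring
  have dH1 : ∀ t ∈ T, HasDerivAt H1 (-lam^2 * h t) t := by
    intro t ht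
    have c1 : HasDerivAt (fun u => F1 lam (sin u)) (F2 lam (sin t) * cos t) t :=
      (hasDerivAt_F1 h0 h1 (sin_mem h0 h1 ht)).comp t (Real.hasDerivAt_sin t)
    have c2 : HasDerivAt (fun u => F1 lam (sin u) * cos u)
        ((F2 lam (sin t) * cos t) * cos t + F1 lam (sin t) * (-sin t)) t :=
      c1.mul (Real.hasDerivAt_cos t)
    have c3 : HasDerivAt (fun u => lam * cos (lam * u)) (lam * (-sin (lam * t) * lam)) t :=
      ((Real.hasDerivAt_cos (lam * t)).comp t (dmul t)).const_mul lam
    have c4 := c2.sub c3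
    refine c4.congr_deriv (Eq.symm ?_)
    have hode := ode h0 h1 (sin_mem h0 h1 ht)
    have hcos : cos t * cos t = 1 - sin t ^ 2 := by
      have := sin_sq_add_cos_sq t
      nlinarith
    simp only [hh]
    linear_combination (-1 : ℝ) * hode - F2 lam (sin t) * hcos
  set E : ℝ → ℝ := fun t => H1 t ^ 2 + lam ^ 2 * (h t) ^ 2 with hE
  have dE : ∀ t ∈ T, HasDerivAt E 0 t := by
    intro t ht
    have c1 := (dH1 t ht).pow 2
    have c2 := ((dh t ht).pow 2).const_mul (lam ^ 2)
    have := c1.add c2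
    refine this.congr_deriv (Eq.symm ?_)
    ring
  have hE0 : E 0 = 0 := by
    have hh0 : h 0 = 0 := by simp [hh, F_zero]
    have hH10 : H1 0 = 0 := by simp [hH1, F1_zero]
    simp [hE, hh0, hH10]
  have hEconst : ∀ t ∈ T, E t = 0 := by
    intro t ht
    rw [← hE0]
    exact const_of_hasDerivAt_zero hTc hTo dE ht h0T
  have hH1van : ∀ t ∈ T, H1 t = 0 := by
    intro t ht
    have he := hEconst t ht
    have h1' : (0:ℝ) ≤ H1 t ^ 2 := sq_nonneg _
    have h2' : (0:ℝ) ≤ lam ^ 2 * (h t) ^ 2 := by positivity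
    have : H1 t ^ 2 = 0 := by simp only [hE] at he; nlinarith
    exact pow_eq_zero_iff (by norm_num) |>.mp this
  have hhconst : ∀ t ∈ T, h t = h 0 := by
    intro t ht
    refine const_of_hasDerivAt_zero hTc hTo (fun u hu => ?_) ht h0T
    have := dh u hu
    rwa [hH1van u hu] at this
  have hh0 : h 0 = 0 := by simp [hh, F_zero]
  have := hhconst θ hθ
  rw [hh0] at this
  simp only [hh] at this
  linarith

end key

section endgame

variable (h0 : 0 ≤ lam) (h1 : lam ≤ 1)
include h0 h1

lemma interior_eq {x : ℝ} (hx : |x| < 1) : F lam x = sin (lam * arcsin x) := by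
  have hx' := abs_lt.mp hx
  have hθ : arcsin x ∈ Set.Ioo (-(π/2)) (π/2) := by
    constructor
    · exact (Real.neg_pi_div_two_lt_arcsin).mpr hx'.1
    · exact (Real.arcsin_lt_pi_div_two).mpr hx'.2
  have := key_identity h0 h1 hθ
  rwa [Real.sin_arcsin hx'.1.le hx'.2.le] at this

/-- the limit of `sin (lam * arcsin x)` as `x → 1⁻`. -/
lemma tendsto_target :
    Filter.Tendsto (fun x => sin (lam * arcsin x)) (nhdsWithin 1 (Set.Iio 1))
      (nhds (sin (lam * (π/2)))) := by
  have hc : Continuous fun x : ℝ => sin (lam * arcsin x) :=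
    Real.continuous_sin.comp (continuous_const.mul Real.continuous_arcsin)
  have := (hc.tendsto (1:ℝ)).mono_left (nhdsWithin_le_nhds (s := Set.Iio (1:ℝ)))
  simpa [Real.arcsin_one] using this

lemma partial_sum_le (K : ℕ) :
    ∑ k ∈ Finset.range K, aCoef lam k ≤ sin (lam * (π/2)) := by
  have hne : (nhdsWithin (1:ℝ) (Set.Iio 1)).NeBot := inferInstance
  have hφ : Filter.Tendsto (fun x : ℝ => ∑ k ∈ Finset.range K, g lam k x)
      (nhdsWithin 1 (Set.Iio 1)) (nhds (∑ k ∈ Finset.range K, aCoef lam k)) := by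
    have hc : Continuous fun x : ℝ => ∑ k ∈ Finset.range K, g lam k x := by
      apply continuous_finset_sum
      intro k _
      exact continuous_const.mul (continuous_pow _)
    have := (hc.tendsto (1:ℝ)).mono_left (nhdsWithin_le_nhds (s := Set.Iio (1:ℝ)))
    simpa [g] using this
  refine le_of_tendsto_of_tendsto hφ (tendsto_target h0 h1) ?_
  filter_upwards [Ioo_mem_nhdsLT (zero_lt_one : (0:ℝ) < 1)]
    with x hx
  have hx01 : 0 < x ∧ x < 1 := ⟨hx.1, hx.2⟩
  have hax : |x| < 1 := by rw [abs_of_pos hx01.1]; exact hx01.2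
  have hsum := summable_g h0 h1 hax
  have hle : ∑ k ∈ Finset.range K, g lam k x ≤ F lam x := by
    refine Summable.sum_le_tsum _ (fun k _ => ?_) hsum
    exact mul_nonneg (aCoef_nonneg h0 h1 k) (pow_nonneg hx01.1.le _)
  calc ∑ k ∈ Finset.range K, g lam k x ≤ F lam x := hle
    _ = sin (lam * arcsin x) := interior_eq h0 h1 hax

lemma summable_aCoef : Summable (aCoef lam) :=
  summable_of_sum_range_le (aCoef_nonneg h0 h1) (partial_sum_le h0 h1)

lemma tsum_aCoef : ∑' k, aCoef lam k = sin (lam * (π/2)) := by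
  have hle : ∑' k, aCoef lam k ≤ sin (lam * (π/2)) :=
    Real.tsum_le_of_sum_range_le (aCoef_nonneg h0 h1) (partial_sum_le h0 h1)
  have hge : sin (lam * (π/2)) ≤ ∑' k, aCoef lam k := by
    refine le_of_tendsto_of_tendsto (tendsto_target h0 h1)
      (tendsto_const_nhds (x := ∑' k, aCoef lam k)) ?_
    filter_upwards [Ioo_mem_nhdsLT (zero_lt_one : (0:ℝ) < 1)]
      with x hx
    have hax : |x| < 1 := by rw [abs_of_pos hx.1]; exact hx.2
    rw [← interior_eq h0 h1 hax, F]
    refine Summable.tsum_le_tsum (fun k => ?_) (summable_g h0 h1 hax) (summable_aCoef h0 h1)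
    rw [g]
    calc aCoef lam k * x ^ (2*k+1) ≤ aCoef lam k * 1 := by
          apply mul_le_mul_of_nonneg_left _ (aCoef_nonneg h0 h1 k)
          exact pow_le_one₀ hx.1.le hx.2.le
      _ = aCoef lam k := mul_one _
  linarith

lemma summable_g_of_le_one {x : ℝ} (hx : |x| ≤ 1) : Summable (fun k => g lam k x) := by
  refine Summable.of_norm_bounded (summable_aCoef h0 h1) (fun k => ?_)
  rw [g, norm_mul, norm_pow, Real.norm_eq_abs, Real.norm_eq_abs,
    abs_of_nonneg (aCoef_nonneg h0 h1 k)]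
  calc aCoef lam k * |x| ^ (2*k+1) ≤ aCoef lam k * 1 := by
        apply mul_le_mul_of_nonneg_left _ (aCoef_nonneg h0 h1 k)
        exact pow_le_one₀ (abs_nonneg x) hx
    _ = aCoef lam k := mul_one _

lemma F_eq {x : ℝ} (hx : |x| ≤ 1) : F lam x = sin (lam * arcsin x) := by
  rcases lt_or_eq_of_le hx with h | h
  · exact interior_eq h0 h1 h
  · rcases (abs_eq (by norm_num : (0:ℝ) ≤ 1)).mp h with rfl | rfl
    · rw [Real.arcsin_one, F]
      have : ∀ k, g lam k 1 = aCoef lam k := by intro k; simp [g]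
      rw [tsum_congr this, tsum_aCoef h0 h1]
    · rw [Real.arcsin_neg_one, F]
      have hodd : ∀ k : ℕ, ((-1:ℝ)) ^ (2*k+1) = -1 := by
        intro k
        exact Odd.neg_one_pow ⟨k, by ring⟩
      have : ∀ k, g lam k (-1) = -(aCoef lam k) := by
        intro k; rw [g, hodd]; ring
      rw [tsum_congr this, tsum_neg, tsum_aCoef h0 h1]
      rw [mul_neg, Real.sin_neg]

end endgame

open Matrix in
lemma quad_expand {N : ℕ} (M : Matrix (Fin N) (Fin N) ℝ) (v : Fin N → ℝ) :
    v ⬝ᵥ M *ᵥ v = ∑ i, ∑ j, v i * M i j * v j := by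
  simp [dotProduct, Matrix.mulVec, Finset.mul_sum, mul_assoc]

open Matrix in
lemma pow_quad_nonneg {N : ℕ} {X : Matrix (Fin N) (Fin N) ℝ} (hX : X.PosSemidef) (m : ℕ)
    (v : Fin N → ℝ) : 0 ≤ ∑ i, ∑ j, v i * (X i j) ^ m * v j := by
  obtain ⟨B, hB⟩ : ∃ B : Matrix (Fin N) (Fin N) ℝ, X = Bᴴ * B := by
    open scoped MatrixOrder in exact CStarAlgebra.nonneg_iff_eq_star_mul_self.mp hX.nonneg
  have hentry : ∀ i j, X i j = ∑ l, B l i * B l j := by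
    intro i j
    rw [hB, Matrix.mul_apply]
    simp [Matrix.conjTranspose_apply]
  have hterm : ∀ i j, v i * (X i j) ^ m * v j
      = ∑ p : Fin m → Fin N, (v i * ∏ t, B (p t) i) * (v j * ∏ t, B (p t) j) := by
    intro i j
    rw [hentry i j, Fintype.sum_pow, Finset.mul_sum, Finset.sum_mul]
    refine Finset.sum_congr rfl fun p _ => ?_
    rw [Finset.prod_mul_distrib]
    ring
  set w : (Fin m → Fin N) → Fin N → ℝ := fun p i => v i * ∏ t, B (p t) i with hw
  have key : ∑ i, ∑ j, v i * (X i j) ^ m * v j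
      = ∑ p : Fin m → Fin N, (∑ i, w p i) ^ 2 :=
    calc ∑ i, ∑ j, v i * (X i j) ^ m * v j
        = ∑ i, ∑ j, ∑ p : Fin m → Fin N, w p i * w p j := by simp_rw [hterm]; rfl
      _ = ∑ i, ∑ p : Fin m → Fin N, ∑ j, w p i * w p j :=
          Finset.sum_congr rfl (fun i _ => Finset.sum_comm)
      _ = ∑ p : Fin m → Fin N, ∑ i, ∑ j, w p i * w p j := Finset.sum_comm
      _ = ∑ p : Fin m → Fin N, (∑ i, w p i) ^ 2 := by
          refine Finset.sum_congr rfl fun p _ => ?_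
          rw [sq, Finset.sum_mul_sum Finset.univ Finset.univ]
  rw [key]
  exact Finset.sum_nonneg fun p _ => sq_nonneg _

open Matrix in
lemma entry_abs_le {N : ℕ} {X : Matrix (Fin N) (Fin N) ℝ} (hX : X.PosSemidef)
    (hd : ∀ i, X i i = 1) (i j : Fin N) : |X i j| ≤ 1 := by
  by_cases hij : i = j
  · subst hij; rw [hd i]; norm_num
  have hsym : X j i = X i j := by
    simpa using (hX.1.apply j i).symm
  have h1 := (posSemidef_iff_dotProduct_mulVec.mp hX).2 (Pi.single i (1:ℝ) + Pi.single j 1)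
  have h2 := (posSemidef_iff_dotProduct_mulVec.mp hX).2 (Pi.single i (1:ℝ) - Pi.single j 1)
  rw [star_trivial, quad_expand] at h1 h2
  simp only [Pi.add_apply, Pi.sub_apply, Pi.single_apply, add_mul, mul_add, sub_mul, mul_sub,
    ite_mul, mul_ite, one_mul, mul_one, zero_mul, mul_zero, Finset.sum_add_distrib,
    Finset.sum_sub_distrib, Finset.sum_ite_eq, Finset.sum_ite_eq', Finset.mem_univ,
    if_true] at h1 h2
  rw [hd i, hd j, hsym] at h1 h2
  rw [abs_le]
  constructor <;> [linarith; linarith]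

end TAStar

open TAStar

/-- The trigonometric approximation TA is star-like with center the
identity matrix: for any `X ∈ SR` and `λ ∈ [0,1]`, the matrix
`λ • f(X) + (1 - λ) • I` lies in `TA`, i.e. equals `f(Y)` for some `Y ∈ SR`,
where `f` is the entrywise map `x ↦ (2/π) * arcsin x`. -/
theorem ta_star_like (n : ℕ) (hn : 0 < n)
    (X : Matrix (Fin n) (Fin n) ℝ) (hX : X.PosSemidef) (hXd : ∀ i, X i i = 1)
    (lam : ℝ) (hlam : lam ∈ Set.Icc (0 : ℝ) 1) :
    ∃ Y : Matrix (Fin n) (Fin n) ℝ, Y.PosSemidef ∧ (∀ i, Y i i = 1) ∧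
      lam • X.map (fun x => 2 / Real.pi * Real.arcsin x) + (1 - lam) • (1 : Matrix (Fin n) (Fin n) ℝ)
        = Y.map (fun x => 2 / Real.pi * Real.arcsin x) := by
  obtain ⟨h0, h1⟩ := hlam
  set s1 : ℝ := Real.sin (lam * (π/2)) with hs1
  have hs1_le : s1 ≤ 1 := Real.sin_le_one _
  have hc : 0 ≤ 1 - s1 := by linarith
  have hbd : ∀ i j, |X i j| ≤ 1 := entry_abs_le hX hXd
  have hsym : ∀ i j, X j i = X i j := fun i j => by simpa using (hX.1.apply j i).symm
  set Y : Matrix (Fin n) (Fin n) ℝ :=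
    Matrix.of fun i j => Real.sin (lam * Real.arcsin (X i j)) + (if i = j then 1 - s1 else 0)
    with hY
  have hYdiag : ∀ i, Y i i = 1 := by
    intro i
    show Real.sin (lam * Real.arcsin (X i i)) + (if i = i then 1 - s1 else 0) = 1
    rw [if_pos rfl, hXd i, Real.arcsin_one, hs1]
    ring
  have hterm_eq : ∀ i j, Real.sin (lam * Real.arcsin (X i j)) = ∑' k, g lam k (X i j) :=
    fun i j => (F_eq h0 h1 (hbd i j)).symm
  refine ⟨Y, posSemidef_iff_dotProduct_mulVec.mpr ⟨?_, ?_⟩, hYdiag, ?_⟩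
  · -- Hermitian
    show Y.conjTranspose = Y
    ext i j
    simp only [Matrix.conjTranspose_apply, hY, Matrix.of_apply, star_trivial]
    rw [hsym i j]
    congr 1
    simp [eq_comm]
  · -- quadratic form
    intro v
    rw [star_trivial, quad_expand]
    have hsummand : ∀ i j : Fin n, Summable (fun k => v i * g lam k (X i j) * v j) :=
      fun i j => ((summable_g_of_le_one h0 h1 (hbd i j)).mul_left (v i)).mul_right (v j)
    have split : ∑ i, ∑ j, v i * Y i j * v j
        = (∑' k, aCoef lam k * ∑ i, ∑ j, v i * (X i j)^(2*k+1) * v j)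
          + (1 - s1) * ∑ i, (v i)^2 :=
      calc ∑ i, ∑ j, v i * Y i j * v j
          = ∑ i, ∑ j, ((∑' k, v i * g lam k (X i j) * v j)
              + v i * (if i = j then 1 - s1 else 0) * v j) := by
            refine Finset.sum_congr rfl fun i _ => Finset.sum_congr rfl fun j _ => ?_
            show v i * (Real.sin (lam * Real.arcsin (X i j)) + (if i = j then 1 - s1 else 0)) * v j = _
            rw [hterm_eq i j, mul_add, add_mul, ← tsum_mul_left, ← tsum_mul_right]
        _ = (∑ i, ∑ j, ∑' k, v i * g lam k (X i j) * v j)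
              + ∑ i, ∑ j, v i * (if i = j then 1 - s1 else 0) * v j := by
            simp only [Finset.sum_add_distrib]
        _ = (∑' k, ∑ i, ∑ j, v i * g lam k (X i j) * v j) + (1 - s1) * ∑ i, (v i)^2 := by
            congr 1
            · calc ∑ i, ∑ j, ∑' k, v i * g lam k (X i j) * v j
                  = ∑ i, ∑' k, ∑ j, v i * g lam k (X i j) * v j :=
                    Finset.sum_congr rfl (fun i _ => (Summable.tsum_finsetSum (fun j _ => hsummand i j)).symm)
                _ = ∑' k, ∑ i, ∑ j, v i * g lam k (X i j) * v j :=
                    (Summable.tsum_finsetSum (fun i _ => summable_sum (fun j _ => hsummand i j))).symm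
            · rw [Finset.mul_sum]
              refine Finset.sum_congr rfl fun i _ => ?_
              rw [Finset.sum_eq_single i (fun b _ hb => by rw [if_neg (Ne.symm hb)]; ring)
                (fun h => absurd (Finset.mem_univ i) h)]
              rw [if_pos rfl]
              ring
        _ = (∑' k, aCoef lam k * ∑ i, ∑ j, v i * (X i j)^(2*k+1) * v j)
              + (1 - s1) * ∑ i, (v i)^2 := by
            congr 1
            refine tsum_congr fun k => ?_
            rw [Finset.mul_sum]
            refine Finset.sum_congr rfl fun i _ => ?_
            rw [Finset.mul_sum]
            refine Finset.sum_congr rfl fun j _ => ?_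
            rw [g]
            ring
    rw [split]
    apply add_nonneg
    · exact tsum_nonneg fun k => mul_nonneg (aCoef_nonneg h0 h1 k) (pow_quad_nonneg hX _ v)
    · exact mul_nonneg hc (Finset.sum_nonneg fun i _ => sq_nonneg _)
  · -- the equation
    ext i j
    simp only [Matrix.add_apply, Matrix.smul_apply, Matrix.map_apply, smul_eq_mul]
    by_cases hij : i = j
    · subst hij
      rw [hYdiag i, hXd i, Real.arcsin_one, Matrix.one_apply_eq]
      field_simp
      ring
    · rw [Matrix.one_apply_ne hij]
      have hYij : Y i j = Real.sin (lam * Real.arcsin (X i j)) := by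
        simp [hY, hij]
      rw [hYij]
      have habs : |Real.arcsin (X i j)| ≤ π/2 :=
        abs_le.mpr ⟨Real.neg_pi_div_two_le_arcsin _, Real.arcsin_le_pi_div_two _⟩
      have hb : -(π/2) ≤ lam * Real.arcsin (X i j) ∧ lam * Real.arcsin (X i j) ≤ π/2 := by
        have := abs_le.mp habs
        constructor <;> nlinarith
      rw [Real.arcsin_sin hb.1 hb.2]
      ring
end

section
/- Let n be a positive integer, let λ ∈ [0,1], and let X be a real symmetric n×n positive semidefinite matrix with all diagonal entries equal to 1. Then the matrix f_λ(X), whose (i,j) entry is sin(λ·arcsin(X_{ij})), is positive semidefinite. That is, the entrywise map f_λ(x) = sin(λ·arcsin(x)) preserves positive semidefiniteness on SR. -/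
open Real Matrix

noncomputable def srA (lam : ℝ) : ℕ → ℝ
  | 0 => lam
  | k+1 => srA lam k * (((2*k+1 : ℝ))^2 - lam^2) / ((2*(k:ℝ)+2)*(2*(k:ℝ)+3))

lemma srA_zero (lam : ℝ) : srA lam 0 = lam := rfl

lemma srA_succ (lam : ℝ) (k : ℕ) :
    srA lam (k+1) = srA lam k * (((2*k+1 : ℝ))^2 - lam^2) / ((2*(k:ℝ)+2)*(2*(k:ℝ)+3)) := rfl

lemma srA_rec (lam : ℝ) (k : ℕ) :
    srA lam (k+1) * ((2*(k:ℝ)+2)*(2*(k:ℝ)+3)) = srA lam k * (((2*k+1 : ℝ))^2 - lam^2) := by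
  rw [srA_succ]
  have h : ((2*(k:ℝ)+2)*(2*(k:ℝ)+3)) ≠ 0 := by positivity
  field_simp

lemma srA_ratio_mem {lam : ℝ} (h0 : 0 ≤ lam) (h1 : lam ≤ 1) (k : ℕ) :
    0 ≤ (((2*k+1 : ℝ))^2 - lam^2) / ((2*(k:ℝ)+2)*(2*(k:ℝ)+3)) ∧
      (((2*k+1 : ℝ))^2 - lam^2) / ((2*(k:ℝ)+2)*(2*(k:ℝ)+3)) ≤ 1 := by
  have hk : (0:ℝ) ≤ (k:ℝ) := Nat.cast_nonneg k
  have hden : (0:ℝ) < (2*(k:ℝ)+2)*(2*(k:ℝ)+3) := by positivity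
  constructor
  · apply div_nonneg _ hden.le
    nlinarith
  · rw [div_le_one hden]
    nlinarith

lemma srA_nonneg {lam : ℝ} (h0 : 0 ≤ lam) (h1 : lam ≤ 1) : ∀ k, 0 ≤ srA lam k := by
  intro k
  induction k with
  | zero => exact h0
  | succ k ih =>
    rw [srA_succ, mul_div_assoc]
    exact mul_nonneg ih (srA_ratio_mem h0 h1 k).1

lemma srA_le_one {lam : ℝ} (h0 : 0 ≤ lam) (h1 : lam ≤ 1) : ∀ k, srA lam k ≤ 1 := by
  intro k
  induction k with
  | zero => exact h1
  | succ k ih =>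
    rw [srA_succ, mul_div_assoc]
    calc srA lam k * ((((2*k+1 : ℝ))^2 - lam^2) / ((2*(k:ℝ)+2)*(2*(k:ℝ)+3)))
        ≤ 1 * 1 := by
          apply mul_le_mul ih (srA_ratio_mem h0 h1 k).2 (srA_ratio_mem h0 h1 k).1 zero_le_one
      _ = 1 := by ring
section sums
variable {lam r x : ℝ}

lemma summable_k_sq (h0 : 0 ≤ r) (hr : r < 1) (c0 c1 c2 : ℝ) :
    Summable (fun k : ℕ => (c2 * (k:ℝ)^2 + c1 * (k:ℝ) + c0) * (r^2)^k) := by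
  have hq : ‖r^2‖ < 1 := by
    rw [Real.norm_eq_abs, abs_of_nonneg (by positivity)]
    nlinarith
  have h2 : Summable (fun k : ℕ => (k:ℝ)^2 * (r^2)^k) :=
    summable_pow_mul_geometric_of_norm_lt_one 2 hq
  have h1 : Summable (fun k : ℕ => (k:ℝ)^1 * (r^2)^k) :=
    summable_pow_mul_geometric_of_norm_lt_one 1 hq
  have h0' : Summable (fun k : ℕ => (r^2)^k) := summable_geometric_of_norm_lt_one hq
  apply Summable.congr (((h2.mul_left c2).add ((h1.mul_left c1))).add (h0'.mul_left c0))
  intro k; ring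

lemma summable_u2 (h0 : 0 ≤ r) (hr : r < 1) :
    Summable (fun k : ℕ => (2*(k:ℝ)+1) * ((2*(k:ℝ)) * r^(2*k-1))) := by
  rw [← summable_nat_add_iff 1]
  apply (summable_k_sq h0 hr (6*r) (10*r) (4*r)).congr
  intro k
  have he : 2*(k+1)-1 = 2*k+1 := by omega
  simp only [he]
  push_cast
  ring

variable (h0 : 0 ≤ lam) (h1 : lam ≤ 1) (hx : |x| ≤ r) (hr : r < 1)
include h0 h1 hx hr

lemma bound0 (k : ℕ) : ‖srA lam k * x^(2*k+1)‖ ≤ (0*(k:ℝ)^2 + 0*(k:ℝ) + 1) * (r^2)^k := by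
  have h0r : 0 ≤ r := le_trans (abs_nonneg x) hx
  have hA : |srA lam k| ≤ 1 := by
    rw [abs_of_nonneg (srA_nonneg h0 h1 k)]; exact srA_le_one h0 h1 k
  calc ‖srA lam k * x^(2*k+1)‖ = |srA lam k| * |x|^(2*k+1) := by
        rw [Real.norm_eq_abs, abs_mul, abs_pow]
    _ ≤ 1 * r^(2*k+1) := by
        apply mul_le_mul hA (pow_le_pow_left₀ (abs_nonneg x) hx _) (by positivity) zero_le_one
    _ ≤ r^(2*k) := by
        rw [one_mul]
        exact pow_le_pow_of_le_one h0r hr.le (by omega)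
    _ = (0*(k:ℝ)^2 + 0*(k:ℝ) + 1) * (r^2)^k := by rw [← pow_mul]; ring

lemma bound1 (k : ℕ) :
    ‖srA lam k * ((2*(k:ℝ)+1) * x^(2*k))‖ ≤ (0*(k:ℝ)^2 + 2*(k:ℝ) + 1) * (r^2)^k := by
  have h0r : 0 ≤ r := le_trans (abs_nonneg x) hx
  have hA : |srA lam k| ≤ 1 := by
    rw [abs_of_nonneg (srA_nonneg h0 h1 k)]; exact srA_le_one h0 h1 k
  have hc : |(2*(k:ℝ)+1)| = 2*(k:ℝ)+1 := abs_of_nonneg (by positivity)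
  calc ‖srA lam k * ((2*(k:ℝ)+1) * x^(2*k))‖
      = |srA lam k| * ((2*(k:ℝ)+1) * |x|^(2*k)) := by
        rw [Real.norm_eq_abs, abs_mul, abs_mul, abs_pow, hc]
    _ ≤ 1 * ((2*(k:ℝ)+1) * r^(2*k)) := by
        apply mul_le_mul hA _ (by positivity) zero_le_one
        apply mul_le_mul_of_nonneg_left (pow_le_pow_left₀ (abs_nonneg x) hx _) (by positivity)
    _ = (0*(k:ℝ)^2 + 2*(k:ℝ) + 1) * (r^2)^k := by rw [← pow_mul]; ring

lemma bound2 (k : ℕ) :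
    ‖srA lam k * ((2*(k:ℝ)+1) * ((2*(k:ℝ)) * x^(2*k-1)))‖
      ≤ (2*(k:ℝ)+1) * ((2*(k:ℝ)) * r^(2*k-1)) := by
  have h0r : 0 ≤ r := le_trans (abs_nonneg x) hx
  have hA : |srA lam k| ≤ 1 := by
    rw [abs_of_nonneg (srA_nonneg h0 h1 k)]; exact srA_le_one h0 h1 k
  calc ‖srA lam k * ((2*(k:ℝ)+1) * ((2*(k:ℝ)) * x^(2*k-1)))‖
      = |srA lam k| * ((2*(k:ℝ)+1) * ((2*(k:ℝ)) * |x|^(2*k-1))) := by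
        rw [Real.norm_eq_abs, abs_mul, abs_mul, abs_mul, abs_pow]
        congr 2
        · exact abs_of_nonneg (by positivity)
        · congr 1
          exact abs_of_nonneg (by positivity)
    _ ≤ 1 * ((2*(k:ℝ)+1) * ((2*(k:ℝ)) * r^(2*k-1))) := by
        apply mul_le_mul hA _ (by positivity) zero_le_one
        apply mul_le_mul_of_nonneg_left _ (by positivity)
        apply mul_le_mul_of_nonneg_left (pow_le_pow_left₀ (abs_nonneg x) hx _) (by positivity)
    _ = (2*(k:ℝ)+1) * ((2*(k:ℝ)) * r^(2*k-1)) := one_mul _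

lemma summable0 : Summable (fun k => srA lam k * x^(2*k+1)) :=
  Summable.of_norm_bounded (summable_k_sq (le_trans (abs_nonneg x) hx) hr 1 0 0)
    (bound0 h0 h1 hx hr)

lemma summable1 : Summable (fun k => srA lam k * ((2*(k:ℝ)+1) * x^(2*k))) :=
  Summable.of_norm_bounded (summable_k_sq (le_trans (abs_nonneg x) hx) hr 1 2 0)
    (bound1 h0 h1 hx hr)

lemma summable2 : Summable (fun k => srA lam k * ((2*(k:ℝ)+1) * ((2*(k:ℝ)) * x^(2*k-1)))) :=
  Summable.of_norm_bounded (summable_u2 (le_trans (abs_nonneg x) hx) hr)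
    (bound2 h0 h1 hx hr)

end sums
noncomputable def srG (lam x : ℝ) : ℝ := ∑' k, srA lam k * x^(2*k+1)
noncomputable def srG1 (lam x : ℝ) : ℝ := ∑' k, srA lam k * ((2*(k:ℝ)+1) * x^(2*k))
noncomputable def srG2 (lam x : ℝ) : ℝ :=
  ∑' k, srA lam k * ((2*(k:ℝ)+1) * ((2*(k:ℝ)) * x^(2*k-1)))

lemma hasDerivAt_tsum_on {f f' : ℕ → ℝ → ℝ} {u : ℕ → ℝ} {s : Set ℝ} (hs : IsOpen s)
    (hu : Summable u)
    (hder : ∀ k, ∀ y ∈ s, HasDerivAt (f k) (f' k y) y)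
    (hbound : ∀ k, ∀ y ∈ s, ‖f' k y‖ ≤ u k)
    (hsum : ∀ y ∈ s, Summable (fun k => f k y))
    {x : ℝ} (hx : x ∈ s) :
    HasDerivAt (fun y => ∑' k, f k y) (∑' k, f' k x) x := by
  apply hasDerivAt_of_tendstoUniformlyOn (g := fun y => ∑' k, f k y) hs
    (tendstoUniformlyOn_tsum hu hbound)
    (Filter.Eventually.of_forall
      (fun t y hy => HasDerivAt.sum (fun k _ => hder k y hy)))
    (fun y hy => by simp only [Finset.sum_apply]; exact (hsum y hy).hasSum) hx

section deriv
variable {lam x : ℝ} (h0 : 0 ≤ lam) (h1 : lam ≤ 1) (hx : |x| < 1)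
include h0 h1 hx

lemma srG_hasDeriv : HasDerivAt (srG lam) (srG1 lam x) x := by
  set r : ℝ := (|x| + 1) / 2 with hrdef
  have h0r : 0 ≤ r := by positivity
  have hxr : |x| < r := by simp only [hrdef]; linarith
  have hr1 : r < 1 := by simp only [hrdef]; linarith
  have hball : x ∈ Metric.ball (0:ℝ) r := by
    simpa [Real.dist_eq] using hxr
  have hmem : ∀ y ∈ Metric.ball (0:ℝ) r, |y| ≤ r := by
    intro y hy
    simp only [Metric.mem_ball, Real.dist_eq, sub_zero] at hy
    exact hy.le
  apply hasDerivAt_tsum_on Metric.isOpen_ball (summable_k_sq h0r hr1 1 2 0)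
    (f := fun k y => srA lam k * y^(2*k+1))
    (f' := fun k y => srA lam k * ((2*(k:ℝ)+1) * y^(2*k)))
  · intro k y _
    have h := (hasDerivAt_pow (2*k+1) y).const_mul (srA lam k)
    refine h.congr_deriv ?_
    have : 2*k+1-1 = 2*k := by omega
    rw [this]
    push_cast
    ring
  · intro k y hy
    exact bound1 h0 h1 (hmem y hy) hr1 k
  · intro y hy
    exact summable0 h0 h1 (hmem y hy) hr1
  · exact hball

lemma srG1_hasDeriv : HasDerivAt (srG1 lam) (srG2 lam x) x := by
  set r : ℝ := (|x| + 1) / 2 with hrdef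
  have h0r : 0 ≤ r := by positivity
  have hxr : |x| < r := by simp only [hrdef]; linarith
  have hr1 : r < 1 := by simp only [hrdef]; linarith
  have hball : x ∈ Metric.ball (0:ℝ) r := by
    simpa [Real.dist_eq] using hxr
  have hmem : ∀ y ∈ Metric.ball (0:ℝ) r, |y| ≤ r := by
    intro y hy
    simp only [Metric.mem_ball, Real.dist_eq, sub_zero] at hy
    exact hy.le
  apply hasDerivAt_tsum_on Metric.isOpen_ball (summable_u2 h0r hr1)
    (f := fun k y => srA lam k * ((2*(k:ℝ)+1) * y^(2*k)))
    (f' := fun k y => srA lam k * ((2*(k:ℝ)+1) * ((2*(k:ℝ)) * y^(2*k-1))))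
  · intro k y _
    have h := ((hasDerivAt_pow (2*k) y).const_mul (2*(k:ℝ)+1)).const_mul (srA lam k)
    refine h.congr_deriv ?_
    push_cast; ring
  · intro k y hy
    exact bound2 h0 h1 (hmem y hy) hr1 k
  · intro y hy
    exact summable1 h0 h1 (hmem y hy) hr1
  · exact hball

end deriv
section ode
variable {lam x : ℝ}

lemma srODE (h0 : 0 ≤ lam) (h1 : lam ≤ 1) (hx : |x| < 1) :
    (1 - x^2) * srG2 lam x - x * srG1 lam x + lam^2 * srG lam x = 0 := by
  have H0 : HasSum (fun k => srA lam k * x^(2*k+1)) (srG lam x) :=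
    (summable0 h0 h1 le_rfl hx).hasSum
  have H1 : HasSum (fun k => srA lam k * ((2*(k:ℝ)+1) * x^(2*k))) (srG1 lam x) :=
    (summable1 h0 h1 le_rfl hx).hasSum
  have H2 : HasSum (fun k => srA lam k * ((2*(k:ℝ)+1) * ((2*(k:ℝ)) * x^(2*k-1))))
      (srG2 lam x) :=
    (summable2 h0 h1 le_rfl hx).hasSum
  set d : ℕ → ℝ := fun k => srA lam k * ((2*(k:ℝ)+1) * ((2*(k:ℝ)) * x^(2*k-1))) with hd
  have HT : HasSum
      (fun k => (1-x^2) * (srA lam k * ((2*(k:ℝ)+1) * ((2*(k:ℝ)) * x^(2*k-1))))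
        - x * (srA lam k * ((2*(k:ℝ)+1) * x^(2*k)))
        + lam^2 * (srA lam k * x^(2*k+1)))
      ((1-x^2) * srG2 lam x - x * srG1 lam x + lam^2 * srG lam x) :=
    ((H2.mul_left _).sub (H1.mul_left _)).add (H0.mul_left _)
  have hstep : ∀ k, (1-x^2) * (srA lam k * ((2*(k:ℝ)+1) * ((2*(k:ℝ)) * x^(2*k-1))))
        - x * (srA lam k * ((2*(k:ℝ)+1) * x^(2*k)))
        + lam^2 * (srA lam k * x^(2*k+1)) = d k - d (k+1) := by
    intro k
    simp only [hd]
    cases k with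
    | zero =>
      have hrec := srA_rec lam 0
      push_cast at hrec ⊢
      norm_num at hrec ⊢
      linear_combination x * hrec
    | succ k =>
      have hrec := srA_rec lam (k+1)
      simp only [show 2*(k+1)-1 = 2*k+1 from by omega, show 2*(k+1+1)-1 = 2*k+3 from by omega,
        show 2*(k+1) = 2*k+2 from by omega, show 2*(k+1)+1 = 2*k+3 from by omega]
      push_cast at hrec ⊢
      linear_combination x^(2*k+3) * hrec
  have HT' : HasSum (fun k => d k - d (k+1))
      ((1-x^2) * srG2 lam x - x * srG1 lam x + lam^2 * srG lam x) :=
    (funext hstep) ▸ HT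
  have hd0 : d 0 = 0 := by simp [hd]
  have hdlim : Filter.Tendsto d Filter.atTop (nhds 0) :=
    squeeze_zero_norm (fun k => bound2 h0 h1 le_rfl hx k)
      ((summable_u2 (abs_nonneg x) hx).tendsto_atTop_zero)
  have h2 := HT'.tendsto_sum_nat
  have h3 : (fun n => ∑ i ∈ Finset.range n, (d i - d (i+1))) = fun n => d 0 - d n :=
    funext fun n => Finset.sum_range_sub' d n
  rw [h3, hd0] at h2
  simp only [zero_sub] at h2
  have h4 : Filter.Tendsto (fun n : ℕ => -d n) Filter.atTop (nhds 0) := by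
    simpa using hdlim.neg
  exact tendsto_nhds_unique h2 h4
end ode
lemma srG_zero (lam : ℝ) : srG lam 0 = 0 := by
  unfold srG
  calc ∑' k : ℕ, srA lam k * (0:ℝ)^(2*k+1) = ∑' _k : ℕ, (0:ℝ) :=
        tsum_congr fun k => by simp
    _ = 0 := tsum_zero

lemma srG1_zero (lam : ℝ) : srG1 lam 0 = lam := by
  unfold srG1
  rw [tsum_eq_single 0 (fun k hk => by
    have h2 : 2*k ≠ 0 := by omega
    simp [zero_pow h2])]
  simp [srA]

lemma srKey {lam x : ℝ} (h0 : 0 < lam) (h1 : lam ≤ 1) (hx : |x| < 1) :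
    srG lam x = sin (lam * arcsin x) := by
  have hpi : 0 < π / 2 := pi_div_two_pos
  set I : Set ℝ := Set.Ioo (-(π/2)) (π/2) with hI
  have hsin_mem : ∀ θ ∈ I, |Real.sin θ| < 1 := by
    intro θ hθ
    obtain ⟨hθ1, hθ2⟩ := hθ
    rw [abs_lt]
    constructor
    · have := Real.strictMonoOn_sin (Set.left_mem_Icc.2 (by linarith))
        ⟨hθ1.le, hθ2.le⟩ hθ1
      simpa using this
    · have := Real.strictMonoOn_sin ⟨hθ1.le, hθ2.le⟩
        (Set.right_mem_Icc.2 (by linarith)) hθ2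
      simpa using this
  have hdd : ∀ θ ∈ I, HasDerivAt (fun t => srG lam (sin t) - sin (lam*t))
      (srG1 lam (sin θ) * cos θ - lam * cos (lam*θ)) θ := by
    intro θ hθ
    have ha := (srG_hasDeriv h0.le h1 (hsin_mem θ hθ)).comp θ (Real.hasDerivAt_sin θ)
    have hb : HasDerivAt (fun t => sin (lam*t)) (cos (lam*θ) * (lam * 1)) θ :=
      (Real.hasDerivAt_sin (lam*θ)).comp θ ((hasDerivAt_id θ).const_mul lam)
    have := ha.sub hb
    simp only [Function.comp_def] at this
    refine this.congr_deriv ?_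
    ring
  have hD : ∀ θ ∈ I, HasDerivAt (fun t => srG1 lam (sin t) * cos t - lam * cos (lam*t))
      (-(lam^2) * (srG lam (sin θ) - sin (lam*θ))) θ := by
    intro θ hθ
    have ha := ((srG1_hasDeriv h0.le h1 (hsin_mem θ hθ)).comp θ
      (Real.hasDerivAt_sin θ)).mul (Real.hasDerivAt_cos θ)
    have hb : HasDerivAt (fun t => lam * cos (lam*t)) (lam * (-sin (lam*θ) * (lam * 1))) θ :=
      ((Real.hasDerivAt_cos (lam*θ)).comp θ ((hasDerivAt_id θ).const_mul lam)).const_mul lam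
    have hc := ha.sub hb
    simp only [Function.comp_def] at hc
    refine hc.congr_deriv ?_
    symm
    have hode := srODE h0.le h1 (hsin_mem θ hθ)
    have hpy := Real.sin_sq_add_cos_sq θ
    linear_combination (-1) * hode - srG2 lam (Real.sin θ) * hpy
  have hE : ∀ θ ∈ I, HasDerivAt (fun t =>
      (srG1 lam (sin t) * cos t - lam * cos (lam*t))^2
        + lam^2 * (srG lam (sin t) - sin (lam*t))^2) 0 θ := by
    intro θ hθ
    have e1 := (hD θ hθ).pow 2
    have e2 := ((hdd θ hθ).pow 2).const_mul (lam^2)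
    refine (e1.add e2).congr_deriv ?_
    ring
  have hI0 : (0:ℝ) ∈ I := by constructor <;> simp [hpi] <;> linarith
  set E : ℝ → ℝ := fun t =>
      (srG1 lam (sin t) * cos t - lam * cos (lam*t))^2
        + lam^2 * (srG lam (sin t) - sin (lam*t))^2 with hEdef
  have hE0 : E 0 = 0 := by
    simp [hEdef, srG_zero, srG1_zero]
  have hEconst : ∀ θ ∈ I, E θ = 0 := by
    intro θ hθ
    obtain ⟨hθ1, hθ2⟩ := hθ
    rcases le_total 0 θ with h|h
    · have hsub : ∀ t ∈ Set.Icc (0:ℝ) θ, t ∈ I := by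
        intro t ⟨ht1, ht2⟩; exact ⟨by linarith, by linarith⟩
      have := constant_of_has_deriv_right_zero
        (f := E) (a := 0) (b := θ)
        (fun t ht => ((hE t (hsub t ht)).continuousAt).continuousWithinAt)
        (fun t ht => ((hE t (hsub t ⟨ht.1, ht.2.le⟩)).hasDerivWithinAt))
        θ ⟨h, le_rfl⟩
      rw [this, hE0]
    · have hsub : ∀ t ∈ Set.Icc θ (0:ℝ), t ∈ I := by
        intro t ⟨ht1, ht2⟩; exact ⟨by linarith, by linarith⟩
      have := constant_of_has_deriv_right_zero
        (f := E) (a := θ) (b := 0)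
        (fun t ht => ((hE t (hsub t ht)).continuousAt).continuousWithinAt)
        (fun t ht => ((hE t (hsub t ⟨ht.1, ht.2.le⟩)).hasDerivWithinAt))
        0 ⟨h, le_rfl⟩
      have h2 := hE0.symm.trans this
      linarith [sq_nonneg (srG1 lam (sin θ) * cos θ - lam * cos (lam*θ)),
        sq_nonneg (srG lam (sin θ) - sin (lam*θ)), sq_nonneg lam,
        mul_nonneg (sq_nonneg lam) (sq_nonneg (srG lam (sin θ) - sin (lam*θ)))]
  -- apply at arcsin x
  have hax : arcsin x ∈ I := by
    rw [abs_lt] at hx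
    exact ⟨Real.neg_pi_div_two_lt_arcsin.2 hx.1, Real.arcsin_lt_pi_div_two.2 hx.2⟩
  have hEx := hEconst (arcsin x) hax
  have hxle : -1 ≤ x ∧ x ≤ 1 := by rw [abs_lt] at hx; exact ⟨hx.1.le, hx.2.le⟩
  rw [hEdef] at hEx
  simp only [Real.sin_arcsin hxle.1 hxle.2] at hEx
  have hl2 : 0 < lam^2 := by positivity
  have h5 : lam^2 * (srG lam x - sin (lam * arcsin x))^2 = 0 := by
    have hA := sq_nonneg (srG1 lam x * cos (arcsin x) - lam * cos (lam * arcsin x))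
    have hB := mul_nonneg hl2.le (sq_nonneg (srG lam x - sin (lam * arcsin x)))
    linarith
  have h6 : (srG lam x - sin (lam * arcsin x))^2 = 0 := by
    rcases mul_eq_zero.mp h5 with h|h
    · exact absurd h hl2.ne'
    · exact h
  have h7 := sq_eq_zero_iff.mp h6
  linarith
section matrixpart
variable {n : ℕ}

lemma quad_eq (M : Matrix (Fin n) (Fin n) ℝ) (v : Fin n → ℝ) :
    dotProduct (star v) (M *ᵥ v) = ∑ i, ∑ j, v i * M i j * v j := by
  simp only [dotProduct, mulVec, star_trivial, Pi.star_apply, Finset.mul_sum]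
  exact Finset.sum_congr rfl fun i _ => Finset.sum_congr rfl fun j _ => by
    ring

lemma herm_entry {X : Matrix (Fin n) (Fin n) ℝ} (hX : X.IsHermitian) (i j : Fin n) :
    X j i = X i j := by
  conv_lhs => rw [← hX]
  simp [conjTranspose_apply]

lemma schur_quad {A B : Matrix (Fin n) (Fin n) ℝ} (hA : A.PosSemidef) (hB : B.PosSemidef)
    (v : Fin n → ℝ) : 0 ≤ ∑ i, ∑ j, v i * (A i j * B i j) * v j := by
  obtain ⟨C, hC⟩ : ∃ C : Matrix (Fin n) (Fin n) ℝ, A = Cᴴ * C := by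
    open scoped MatrixOrder Matrix.Norms.L2Operator in
    obtain ⟨B, rfl⟩ := CStarAlgebra.nonneg_iff_eq_star_mul_self.mp hA.nonneg
    exact ⟨B, rfl⟩
  have hAe : ∀ i j, A i j = ∑ k, C k i * C k j := by
    intro i j
    rw [hC]
    simp [Matrix.mul_apply, Matrix.conjTranspose_apply]
  have key : ∀ i j, v i * (A i j * B i j) * v j
      = ∑ k, (C k i * v i) * B i j * (C k j * v j) := by
    intro i j
    rw [hAe i j, Finset.sum_mul, Finset.mul_sum, Finset.sum_mul]
    exact Finset.sum_congr rfl fun k _ => by ring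
  simp only [key]
  rw [show ∑ i, ∑ j, ∑ k, (C k i * v i) * B i j * (C k j * v j)
      = ∑ k, ∑ i, ∑ j, (C k i * v i) * B i j * (C k j * v j) from
    (Finset.sum_congr rfl fun i _ => Finset.sum_comm).trans Finset.sum_comm]
  apply Finset.sum_nonneg
  intro k _
  have h := hB.dotProduct_mulVec_nonneg (fun i => C k i * v i)
  rwa [quad_eq] at h

lemma psd_entry_pow {X : Matrix (Fin n) (Fin n) ℝ} (hX : X.PosSemidef) (m : ℕ) :
    (Matrix.of fun i j => X i j ^ (m+1)).PosSemidef := by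
  induction m with
  | zero =>
    convert hX using 2
    ext i j
    simp
  | succ m ih =>
    refine Matrix.PosSemidef.of_dotProduct_mulVec_nonneg ?_ ?_
    · ext i j
      simp only [Matrix.conjTranspose_apply, Matrix.of_apply, star_trivial]
      rw [herm_entry hX.1 i j]
    · intro v
      rw [quad_eq]
      have h := schur_quad hX ih v
      refine h.trans_eq ?_
      refine Finset.sum_congr rfl fun i _ => Finset.sum_congr rfl fun j _ => ?_
      simp only [Matrix.of_apply]
      rw [pow_succ' (X i j) (m+1)]

lemma psd_quad_pow {X : Matrix (Fin n) (Fin n) ℝ} (hX : X.PosSemidef) (k : ℕ)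
    (v : Fin n → ℝ) : 0 ≤ ∑ i, ∑ j, v i * X i j ^ (2*k+1) * v j := by
  have h := (psd_entry_pow hX (2*k)).dotProduct_mulVec_nonneg v
  rw [quad_eq] at h
  simpa using h

end matrixpart
section mainpart
variable {n : ℕ}

lemma psd_scale {X : Matrix (Fin n) (Fin n) ℝ} (hX : X.PosSemidef) {c : ℝ} (hc : 0 ≤ c) :
    (Matrix.of fun i j => c * X i j).PosSemidef := by
  refine Matrix.PosSemidef.of_dotProduct_mulVec_nonneg ?_ ?_
  · ext i j
    simp only [Matrix.conjTranspose_apply, Matrix.of_apply, star_trivial]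
    rw [herm_entry hX.1 i j]
  · intro v
    rw [quad_eq]
    have h := hX.dotProduct_mulVec_nonneg v
    rw [quad_eq] at h
    have he : ∑ i, ∑ j, v i * ((Matrix.of fun i j => c * X i j) i j) * v j
        = c * ∑ i, ∑ j, v i * X i j * v j := by
      rw [Finset.mul_sum]
      refine Finset.sum_congr rfl fun i _ => ?_
      rw [Finset.mul_sum]
      exact Finset.sum_congr rfl fun j _ => by simp only [Matrix.of_apply]; ring
    rw [he]
    exact mul_nonneg hc h

lemma main_strict {lam : ℝ} (h0 : 0 ≤ lam) (h1 : lam ≤ 1)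
    {Y : Matrix (Fin n) (Fin n) ℝ} (hY : Y.PosSemidef) (hb : ∀ i j, |Y i j| < 1) :
    (Matrix.of fun i j => Real.sin (lam * Real.arcsin (Y i j))).PosSemidef := by
  rcases eq_or_lt_of_le h0 with h|hpos
  · have hz : (Matrix.of fun i j => Real.sin (lam * Real.arcsin (Y i j)))
        = (0 : Matrix (Fin n) (Fin n) ℝ) := by
      ext i j
      simp [← h]
    rw [hz]
    exact Matrix.PosSemidef.zero
  · have hentry : ∀ i j, Real.sin (lam * Real.arcsin (Y i j)) = srG lam (Y i j) :=
      fun i j => (srKey hpos h1 (hb i j)).symm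
    refine Matrix.PosSemidef.of_dotProduct_mulVec_nonneg ?_ ?_
    · ext i j
      simp only [Matrix.conjTranspose_apply, Matrix.of_apply, star_trivial]
      rw [herm_entry hY.1 i j]
    · intro v
      rw [quad_eq]
      simp only [Matrix.of_apply, hentry]
      have hsum : HasSum (fun k => ∑ i, ∑ j, v i * (srA lam k * (Y i j)^(2*k+1)) * v j)
          (∑ i, ∑ j, v i * srG lam (Y i j) * v j) := by
        refine hasSum_sum fun i _ => hasSum_sum fun j _ => ?_
        exact ((summable0 h0 h1 le_rfl (hb i j)).hasSum.mul_left (v i)).mul_right (v j)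
      have hnn : ∀ k, 0 ≤ ∑ i, ∑ j, v i * (srA lam k * (Y i j)^(2*k+1)) * v j := by
        intro k
        have hterm : ∑ i, ∑ j, v i * (srA lam k * (Y i j)^(2*k+1)) * v j
            = srA lam k * ∑ i, ∑ j, v i * (Y i j)^(2*k+1) * v j := by
          rw [Finset.mul_sum]
          refine Finset.sum_congr rfl fun i _ => ?_
          rw [Finset.mul_sum]
          exact Finset.sum_congr rfl fun j _ => by ring
        rw [hterm]
        exact mul_nonneg (srA_nonneg h0 h1 k) (psd_quad_pow hY k v)
      exact hasSum_le (fun k => hnn k) hasSum_zero hsum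

end mainpart

/-- For `λ ∈ [0,1]` and `X ∈ SR` (symmetric PSD with unit diagonal),
the matrix with entries `sin (λ * arcsin (X i j))` is positive semidefinite. -/
theorem entrywise_sin_lambda_arcsin_posSemidef (n : ℕ) (hn : 0 < n)
    (lam : ℝ) (hlam : lam ∈ Set.Icc (0 : ℝ) 1)
    (X : Matrix (Fin n) (Fin n) ℝ) (hX : X.PosSemidef) (hXd : ∀ i, X i i = 1) :
    (Matrix.of fun i j => Real.sin (lam * Real.arcsin (X i j))).PosSemidef := by
  obtain ⟨hl0, hl1⟩ := hlam
  -- entries of X are bounded by 1 in absolute value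
  have hXb : ∀ i j, |X i j| ≤ 1 := by
    intro i j
    rcases eq_or_ne i j with rfl|hij
    · rw [hXd i]; norm_num
    · have hsym := herm_entry hX.1 i j
      have hq : ∀ c : ℝ, 0 ≤ 1 + c * X i j + c * X j i + c^2 := by
        intro c
        set w : Fin n → ℝ :=
          fun k => (if k = i then 1 else 0) + c * (if k = j then 1 else 0) with hw
        have h := hX.dotProduct_mulVec_nonneg w
        rw [quad_eq] at h
        have hexp : ∑ k, ∑ l, w k * X k l * w l
            = 1 + c * X i j + c * X j i + c^2 := by
          simp only [hw, add_mul, mul_add, Finset.sum_add_distrib, ite_mul, mul_ite,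
            zero_mul, mul_zero, one_mul, mul_one, Finset.sum_ite_eq', Finset.mem_univ,
            if_true]
          rw [hXd i, hXd j]
          ring
        rw [hexp] at h
        exact h
      have h1' := hq 1
      have h2' := hq (-1)
      rw [abs_le]
      constructor <;> nlinarith [hsym]
  refine Matrix.PosSemidef.of_dotProduct_mulVec_nonneg ?_ ?_
  · ext i j
    simp only [Matrix.conjTranspose_apply, Matrix.of_apply, star_trivial]
    rw [herm_entry hX.1 i j]
  · intro v
    rw [quad_eq]
    set F : ℝ → ℝ :=
      fun t => ∑ i, ∑ j, v i * Real.sin (lam * Real.arcsin ((1-t) * X i j)) * v j with hF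
    have hFc : Continuous F := by
      apply continuous_finset_sum
      intro i _
      apply continuous_finset_sum
      intro j _
      apply Continuous.mul
      apply Continuous.mul continuous_const
      · exact Real.continuous_sin.comp (continuous_const.mul
          (Real.continuous_arcsin.comp ((continuous_const.sub continuous_id).mul
            continuous_const)))
      · exact continuous_const
    have hFn : ∀ m : ℕ, 0 ≤ F (1/(m+1)) := by
      intro m
      set t : ℝ := 1/((m:ℝ)+1) with ht
      have ht0 : 0 < t := by positivity
      have ht1 : t ≤ 1 := by
        rw [ht]
        rw [div_le_one (by positivity)]
        simp
      have hY : (Matrix.of fun i j => (1-t) * X i j).PosSemidef :=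
        psd_scale hX (by linarith)
      have hYb : ∀ i j, |(Matrix.of fun i j => (1-t) * X i j) i j| < 1 := by
        intro i j
        simp only [Matrix.of_apply]
        rw [abs_mul, abs_of_nonneg (by linarith : (0:ℝ) ≤ 1-t)]
        calc (1-t) * |X i j| ≤ (1-t) * 1 :=
              mul_le_mul_of_nonneg_left (hXb i j) (by linarith)
          _ < 1 := by linarith
      have hmain := (main_strict hl0 hl1 hY hYb).dotProduct_mulVec_nonneg v
      rw [quad_eq] at hmain
      simpa only [Matrix.of_apply] using hmain
    have hlim : Filter.Tendsto (fun m : ℕ => F (1/(m+1))) Filter.atTop (nhds (F 0)) := by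
      apply (hFc.tendsto 0).comp
      exact tendsto_one_div_add_atTop_nhds_zero_nat
    have hge : 0 ≤ F 0 := ge_of_tendsto hlim (Filter.Eventually.of_forall hFn)
    have hF0 : F 0 = ∑ i, ∑ j, v i * Real.sin (lam * Real.arcsin (X i j)) * v j := by
      rw [hF]
      norm_num
    rw [hF0] at hge
    exact hge
end

section
/- Let n be a positive integer, let λ ∈ [0,1], and let X be a real symmetric n×n positive semidefinite matrix with all diagonal entries equal to 1. Then the matrix f_λ(X) + (1 − sin(πλ/2))·I is positive semidefinite, where f_λ(X) is the matrix with (i,j) entry sin(λ·arcsin(X_{ij})) and I is the n×n identity matrix. -/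
open Real Matrix Finset

variable {lam : ℝ}


noncomputable def aSin (lam : ℝ) : ℕ → ℝ
  | 0 => lam
  | k + 1 => aSin lam k * ((2*(k:ℝ)+1)^2 - lam^2) / ((2*(k:ℝ)+2)*(2*(k:ℝ)+3))

lemma aSin_nonneg {lam : ℝ} (h0 : 0 ≤ lam) (h1 : lam ≤ 1) : ∀ k, 0 ≤ aSin lam k := by
  intro k
  induction k with
  | zero => exact h0
  | succ k ih =>
    have hk : (0:ℝ) ≤ (k:ℝ) := Nat.cast_nonneg k
    have : lam^2 ≤ (2*(k:ℝ)+1)^2 := by nlinarith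
    have hden : (0:ℝ) < (2*(k:ℝ)+2)*(2*(k:ℝ)+3) := by positivity
    rw [aSin]
    apply div_nonneg (mul_nonneg ih (by nlinarith)) (le_of_lt hden)

lemma aSin_le_one {lam : ℝ} (h0 : 0 ≤ lam) (h1 : lam ≤ 1) : ∀ k, aSin lam k ≤ 1 := by
  intro k
  induction k with
  | zero => exact h1
  | succ k ih =>
    have hk : (0:ℝ) ≤ (k:ℝ) := Nat.cast_nonneg k
    have hden : (0:ℝ) < (2*(k:ℝ)+2)*(2*(k:ℝ)+3) := by positivity
    rw [aSin, div_le_one hden]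
    have h2 : (2*(k:ℝ)+1)^2 - lam^2 ≤ (2*(k:ℝ)+2)*(2*(k:ℝ)+3) := by nlinarith
    have h3 : (0:ℝ) ≤ (2*(k:ℝ)+1)^2 - lam^2 := by nlinarith
    calc aSin lam k * ((2*(k:ℝ)+1)^2 - lam^2) ≤ 1 * ((2*(k:ℝ)+2)*(2*(k:ℝ)+3)) := by
          apply mul_le_mul ih h2 h3 zero_le_one
      _ = (2*(k:ℝ)+2)*(2*(k:ℝ)+3) := one_mul _

lemma aSin_rec (lam : ℝ) (k : ℕ) :
    (lam * ((2*(k:ℝ)+1)^2 - lam^2) / ((2*(k:ℝ)+2)*(2*(k:ℝ)+3))) * ((2*(k:ℝ)+2)*(2*(k:ℝ)+3))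
      = lam * ((2*(k:ℝ)+1)^2 - lam^2) := by
  have hk : (0:ℝ) ≤ (k:ℝ) := Nat.cast_nonneg k
  have hden : ((2*(k:ℝ)+2)*(2*(k:ℝ)+3)) ≠ 0 := by positivity
  field_simp

-- summability of (c₂ k² + c₁ k + c₀) r^k for |r| < 1
lemma summable_quad_geom {r : ℝ} (hr : |r| < 1) (c₂ c₁ c₀ : ℝ) :
    Summable (fun k : ℕ => (c₂*(k:ℝ)^2 + c₁*(k:ℝ) + c₀) * r ^ k) := by
  have h2 : Summable (fun k : ℕ => (k:ℝ)^2 * r ^ k) := by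
    simpa using summable_pow_mul_geometric_of_norm_lt_one (R := ℝ) 2 (by simpa using hr)
  have h1 : Summable (fun k : ℕ => (k:ℝ) * r ^ k) := by
    simpa using summable_pow_mul_geometric_of_norm_lt_one (R := ℝ) 1 (by simpa using hr)
  have h0 : Summable (fun k : ℕ => r ^ k) := summable_geometric_of_norm_lt_one (by simpa using hr)
  have := ((h2.mul_left c₂).add (h1.mul_left c₁)).add (h0.mul_left c₀)
  refine this.congr fun k => ?_
  ring

lemma aSin_abs_le_one (h0 : 0 ≤ lam) (h1 : lam ≤ 1) (k : ℕ) : |aSin lam k| ≤ 1 := by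
  rw [abs_of_nonneg (aSin_nonneg h0 h1 k)]; exact aSin_le_one h0 h1 k

lemma summable_S0 (h0 : 0 ≤ lam) (h1 : lam ≤ 1) {x : ℝ} (hx : |x| < 1) :
    Summable (fun k => aSin lam k * x^(2*k+1)) := by
  have hr : |x^2| < 1 := by rw [abs_of_nonneg (sq_nonneg x), ← sq_abs]; nlinarith [abs_nonneg x]
  refine Summable.of_norm_bounded (summable_quad_geom hr 0 0 1) fun k => ?_
  simp only [Real.norm_eq_abs, abs_mul, abs_pow, zero_mul, zero_add, one_mul]
  calc |aSin lam k| * |x|^(2*k+1) ≤ 1 * |x|^(2*k) := by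
        apply mul_le_mul (aSin_abs_le_one h0 h1 k)
          (pow_le_pow_of_le_one (abs_nonneg x) hx.le (by omega)) (by positivity) zero_le_one
    _ = (x^2)^k := by rw [one_mul, pow_mul, sq_abs]

lemma summable_S1 (h0 : 0 ≤ lam) (h1 : lam ≤ 1) {x : ℝ} (hx : |x| < 1) :
    Summable (fun k => aSin lam k * ((2*(k:ℝ)+1) * x^(2*k))) := by
  have hr : |x^2| < 1 := by rw [abs_of_nonneg (sq_nonneg x), ← sq_abs]; nlinarith [abs_nonneg x]
  refine Summable.of_norm_bounded (summable_quad_geom hr 0 2 1) fun k => ?_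
  have hk : (0:ℝ) ≤ 2*(k:ℝ)+1 := by positivity
  simp only [Real.norm_eq_abs, abs_mul, abs_pow]
  rw [abs_of_nonneg hk]
  have h2 : |x|^(2*k) = (x^2)^k := by rw [pow_mul, sq_abs]
  calc |aSin lam k| * ((2*(k:ℝ)+1) * |x|^(2*k)) ≤ 1 * ((2*(k:ℝ)+1) * |x|^(2*k)) := by
        apply mul_le_mul_of_nonneg_right (aSin_abs_le_one h0 h1 k) (by positivity)
    _ = (0*(k:ℝ)^2 + 2*(k:ℝ)+1) * (x^2)^k := by rw [h2]; ring

lemma summable_S2 (h0 : 0 ≤ lam) (h1 : lam ≤ 1) {x : ℝ} (hx : |x| < 1) :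
    Summable (fun k => aSin lam k * ((2*(k:ℝ)+1) * ((2*(k:ℝ)) * x^(2*k-1)))) := by
  have hr : |(|x|)| < 1 := by rwa [abs_abs]
  refine Summable.of_norm_bounded (summable_quad_geom hr 4 2 0) fun k => ?_
  simp only [Real.norm_eq_abs, abs_mul, abs_pow, abs_two, Nat.abs_cast]
  rcases Nat.eq_zero_or_pos k with rfl | hkpos
  · simp
  have hk1 : (0:ℝ) ≤ 2*(k:ℝ)+1 := by positivity
  have hk2 : (0:ℝ) ≤ 2*(k:ℝ) := by positivity
  rw [abs_of_nonneg hk1]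
  have hpow : |x|^(2*k-1) ≤ |x|^k :=
    pow_le_pow_of_le_one (abs_nonneg x) hx.le (by omega)
  have hb : |aSin lam k| * ((2*(k:ℝ)+1) * ((2*(k:ℝ)) * |x|^(2*k-1)))
      ≤ (2*(k:ℝ)+1) * ((2*(k:ℝ)) * |x|^k) := by
    calc |aSin lam k| * ((2*(k:ℝ)+1) * ((2*(k:ℝ)) * |x|^(2*k-1)))
        ≤ 1 * ((2*(k:ℝ)+1) * ((2*(k:ℝ)) * |x|^(2*k-1))) := by
          apply mul_le_mul_of_nonneg_right (aSin_abs_le_one h0 h1 k) (by positivity)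
      _ = (2*(k:ℝ)+1) * ((2*(k:ℝ)) * |x|^(2*k-1)) := one_mul _
      _ ≤ (2*(k:ℝ)+1) * ((2*(k:ℝ)) * |x|^k) := by
          apply mul_le_mul_of_nonneg_left (mul_le_mul_of_nonneg_left hpow hk2) hk1
  refine hb.trans (le_of_eq ?_)
  ring

lemma hasDerivAt_S0 (h0 : 0 ≤ lam) (h1 : lam ≤ 1) {x : ℝ} (hx : |x| < 1) :
    HasDerivAt (fun y : ℝ => ∑' k, aSin lam k * y^(2*k+1))
      (∑' k, aSin lam k * ((2*(k:ℝ)+1) * x^(2*k))) x := by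
  set r : ℝ := (|x| + 1)/2 with hrdef
  have hr0 : 0 < r := by positivity
  have hr1 : r < 1 := by simp only [hrdef]; linarith
  have hxr : |x| < r := by simp only [hrdef]; linarith
  have hrr : |r^2| < 1 := by
    rw [abs_of_nonneg (sq_nonneg r)]; nlinarith
  refine hasDerivAt_tsum_of_isPreconnected
    (u := fun (k : ℕ) => (0*(k:ℝ)^2 + 2*(k:ℝ)+1) * (r^2)^k)
    (summable_quad_geom hrr 0 2 1) Metric.isOpen_ball
    ((convex_ball (0:ℝ) r).isPreconnected)
    (g' := fun (k : ℕ) (y : ℝ) => aSin lam k * ((2*(k:ℝ)+1) * y^(2*k)))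
    (fun k y _ => ?_) (fun k y hy => ?_)
    (y₀ := 0) (by simpa [Real.norm_eq_abs] using hr0) ?_
    (by simpa [Real.norm_eq_abs] using hxr)
  · have h := (hasDerivAt_pow (2*k+1) y).const_mul (aSin lam k)
    convert h using 1
    · rfl
    push_cast
    ring_nf
  · rw [Metric.mem_ball, dist_zero_right, Real.norm_eq_abs] at hy
    simp only [Real.norm_eq_abs, abs_mul, abs_pow]
    have hk1 : (0:ℝ) ≤ 2*(k:ℝ)+1 := by positivity
    rw [abs_of_nonneg hk1]
    have hyp : |y|^(2*k) ≤ (r^2)^k := by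
      rw [← pow_mul]
      exact pow_le_pow_left₀ (abs_nonneg y) hy.le _
    calc |aSin lam k| * ((2*(k:ℝ)+1) * |y|^(2*k))
        ≤ 1 * ((2*(k:ℝ)+1) * (r^2)^k) := by
          apply mul_le_mul (aSin_abs_le_one h0 h1 k)
            (mul_le_mul_of_nonneg_left hyp hk1) (by positivity) zero_le_one
      _ = (0*(k:ℝ)^2 + 2*(k:ℝ)+1) * (r^2)^k := by ring
  · have : (fun k => aSin lam k * (0:ℝ)^(2*k+1)) = fun _ => (0:ℝ) := by
      funext k; rw [zero_pow (by omega)]; ring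
    rw [this]; exact summable_zero

lemma hasDerivAt_S1 (h0 : 0 ≤ lam) (h1 : lam ≤ 1) {x : ℝ} (hx : |x| < 1) :
    HasDerivAt (fun y : ℝ => ∑' k, aSin lam k * ((2*(k:ℝ)+1) * y^(2*k)))
      (∑' k, aSin lam k * ((2*(k:ℝ)+1) * ((2*(k:ℝ)) * x^(2*k-1)))) x := by
  set r : ℝ := (|x| + 1)/2 with hrdef
  have hr0 : 0 < r := by positivity
  have hr1 : r < 1 := by simp only [hrdef]; linarith
  have hxr : |x| < r := by simp only [hrdef]; linarith
  have hrr : |r| < 1 := by rwa [abs_of_nonneg hr0.le]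
  refine hasDerivAt_tsum_of_isPreconnected
    (u := fun (k : ℕ) => (4*(k:ℝ)^2 + 2*(k:ℝ)+0) * r^k)
    (summable_quad_geom hrr 4 2 0) Metric.isOpen_ball
    ((convex_ball (0:ℝ) r).isPreconnected)
    (g' := fun (k : ℕ) (y : ℝ) => aSin lam k * ((2*(k:ℝ)+1) * ((2*(k:ℝ)) * y^(2*k-1))))
    (fun k y _ => ?_) (fun k y hy => ?_)
    (y₀ := 0) (by simpa [Real.norm_eq_abs] using hr0) ?_
    (by simpa [Real.norm_eq_abs] using hxr)
  · have h := (hasDerivAt_pow (2*k) y).const_mul (aSin lam k * (2*(k:ℝ)+1))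
    convert h using 1
    · rfl
    · funext z; ring
    · push_cast; ring
  · rw [Metric.mem_ball, dist_zero_right, Real.norm_eq_abs] at hy
    simp only [Real.norm_eq_abs, abs_mul, abs_pow, abs_two, Nat.abs_cast]
    rcases Nat.eq_zero_or_pos k with rfl | hkpos
    · simp
    have hk1 : (0:ℝ) ≤ 2*(k:ℝ)+1 := by positivity
    have hk2 : (0:ℝ) ≤ 2*(k:ℝ) := by positivity
    rw [abs_of_nonneg hk1]
    have hyp : |y|^(2*k-1) ≤ r^k := by
      calc |y|^(2*k-1) ≤ |y|^k := pow_le_pow_of_le_one (abs_nonneg y)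
            (hy.le.trans hr1.le) (by omega)
        _ ≤ r^k := pow_le_pow_left₀ (abs_nonneg y) hy.le _
    calc |aSin lam k| * ((2*(k:ℝ)+1) * (2 * (k:ℝ) * |y|^(2*k-1)))
        ≤ 1 * ((2*(k:ℝ)+1) * (2*(k:ℝ) * r^k)) := by
          apply mul_le_mul (aSin_abs_le_one h0 h1 k)
            (mul_le_mul_of_nonneg_left (mul_le_mul_of_nonneg_left hyp hk2) hk1)
            (by positivity) zero_le_one
      _ = (4*(k:ℝ)^2 + 2*(k:ℝ)+0) * r^k := by ring
  · refine summable_of_ne_finset_zero (s := {0}) fun k hk => ?_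
    have hk' : k ≠ 0 := by simpa using hk
    rw [zero_pow (by omega)]
    ring

lemma aSin_succ_mul (lam : ℝ) (k : ℕ) :
    aSin lam (k+1) * ((2*(k:ℝ)+2)*(2*(k:ℝ)+3)) = aSin lam k * ((2*(k:ℝ)+1)^2 - lam^2) := by
  have hden : ((2*(k:ℝ)+2)*(2*(k:ℝ)+3)) ≠ 0 := by positivity
  rw [aSin]
  field_simp

lemma ode_term (lam : ℝ) (x : ℝ) (k : ℕ) :
    (1 - x^2) * (aSin lam k * ((2*(k:ℝ)+1) * ((2*(k:ℝ)) * x^(2*k-1))))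
      - x * (aSin lam k * ((2*(k:ℝ)+1) * x^(2*k)))
      + lam^2 * (aSin lam k * x^(2*k+1))
    = (aSin lam k * ((2*(k:ℝ)+1) * ((2*(k:ℝ)) * x^(2*k-1))))
      - (aSin lam (k+1) * ((2*((k:ℝ)+1)+1) * ((2*((k:ℝ)+1)) * x^(2*(k+1)-1)))) := by
  have hrec := aSin_succ_mul lam k
  rcases k with _ | j
  · push_cast at hrec ⊢
    norm_num at hrec ⊢
    linear_combination x * hrec
  · have e1 : 2*(j+1) - 1 = 2*j+1 := by omega
    have e2 : 2*(j+1) = 2*j+2 := by omega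
    have e4 : 2*(j+1+1) - 1 = 2*j+3 := by omega
    rw [e1, e4, e2]
    push_cast at hrec ⊢
    linear_combination (x^(2*j+3)) * hrec

lemma ode_S (h0 : 0 ≤ lam) (h1 : lam ≤ 1) {x : ℝ} (hx : |x| < 1) :
    (1 - x^2) * (∑' k, aSin lam k * ((2*(k:ℝ)+1) * ((2*(k:ℝ)) * x^(2*k-1))))
      - x * (∑' k, aSin lam k * ((2*(k:ℝ)+1) * x^(2*k)))
      + lam^2 * (∑' k, aSin lam k * x^(2*k+1)) = 0 := by
  have hSc : Summable (fun k => aSin lam k * ((2*(k:ℝ)+1) * ((2*(k:ℝ)) * x^(2*k-1)))) :=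
    summable_S2 h0 h1 hx
  have hS1 := summable_S1 h0 h1 hx
  have hS0 := summable_S0 h0 h1 hx
  set c : ℕ → ℝ := fun k => aSin lam k * ((2*(k:ℝ)+1) * ((2*(k:ℝ)) * x^(2*k-1))) with hc
  have hSc' : Summable (fun k => c (k+1)) := (summable_nat_add_iff 1).mpr hSc
  rw [← tsum_mul_left, ← tsum_mul_left, ← tsum_mul_left,
    ← Summable.tsum_sub (hSc.mul_left _) (hS1.mul_left _),
    ← Summable.tsum_add ((hSc.mul_left _).sub (hS1.mul_left _)) (hS0.mul_left _)]
  have hterm : ∀ k, (1 - x^2) * c k - x * (aSin lam k * ((2*(k:ℝ)+1) * x^(2*k)))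
      + lam^2 * (aSin lam k * x^(2*k+1)) = c k - c (k+1) := by
    intro k
    have := ode_term lam x k
    simp only [hc]
    push_cast
    push_cast at this
    linarith [this]
  calc (∑' k, ((1 - x^2) * c k - x * (aSin lam k * ((2*(k:ℝ)+1) * x^(2*k)))
          + lam^2 * (aSin lam k * x^(2*k+1))))
      = ∑' k, (c k - c (k+1)) := tsum_congr hterm
    _ = (∑' k, c k) - ∑' k, c (k+1) := Summable.tsum_sub hSc hSc'
    _ = (∑' k, c k) - ((∑' k, c k) - c 0) := by
        rw [Summable.tsum_eq_zero_add hSc]; ring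
    _ = c 0 := by ring
    _ = 0 := by simp [hc]

lemma sin_mem_ball {θ : ℝ} (hθ : θ ∈ Set.Ioo (-(π/2)) (π/2)) : |Real.sin θ| < 1 := by
  rw [abs_lt]
  constructor
  · have := Real.strictMonoOn_sin (a := -(π/2)) (b := θ)
      ⟨le_refl _, by linarith [Real.pi_pos]⟩ ⟨hθ.1.le, hθ.2.le⟩ hθ.1
    rwa [Real.sin_neg, Real.sin_pi_div_two] at this
  · have := Real.strictMonoOn_sin (a := θ) (b := π/2)
      ⟨hθ.1.le, hθ.2.le⟩ ⟨by linarith [Real.pi_pos], le_refl _⟩ hθ.2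
    rwa [Real.sin_pi_div_two] at this

lemma u_eq_zero (h0 : 0 < lam) (h1 : lam ≤ 1) :
    ∀ θ ∈ Set.Ioo (-(π/2)) (π/2),
      (∑' k, aSin lam k * (Real.sin θ)^(2*k+1)) = Real.sin (lam * θ) := by
  have h0' := h0.le
  set I : Set ℝ := Set.Ioo (-(π/2)) (π/2) with hI
  set u : ℝ → ℝ := fun θ => (∑' k, aSin lam k * (Real.sin θ)^(2*k+1)) - Real.sin (lam*θ) with hu
  set u1 : ℝ → ℝ := fun θ =>
    (∑' k, aSin lam k * ((2*(k:ℝ)+1) * (Real.sin θ)^(2*k))) * Real.cos θ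
      - Real.cos (lam*θ) * lam with hu1
  set E : ℝ → ℝ := fun θ => u1 θ^2 + lam^2 * u θ^2 with hE
  have hlin : ∀ θ : ℝ, HasDerivAt (fun t : ℝ => lam * t) lam θ := by
    intro θ
    simpa using (hasDerivAt_id θ).const_mul lam
  have hu' : ∀ θ ∈ I, HasDerivAt u (u1 θ) θ := by
    intro θ hθ
    have hg := (hasDerivAt_S0 h0' h1 (sin_mem_ball hθ)).comp θ (Real.hasDerivAt_sin θ)
    have hs : HasDerivAt (fun t : ℝ => Real.sin (lam * t)) (Real.cos (lam*θ) * lam) θ :=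
      (Real.hasDerivAt_sin (lam*θ)).comp θ (hlin θ)
    exact hg.sub hs
  have hu1' : ∀ θ ∈ I, HasDerivAt u1 (-(lam^2) * u θ) θ := by
    intro θ hθ
    have hG1 := (hasDerivAt_S1 h0' h1 (sin_mem_ball hθ)).comp θ (Real.hasDerivAt_sin θ)
    have hmul := hG1.mul (Real.hasDerivAt_cos θ)
    have hc : HasDerivAt (fun t : ℝ => Real.cos (lam * t) * lam)
        ((-Real.sin (lam*θ) * lam) * lam) θ :=
      (((Real.hasDerivAt_cos (lam*θ)).comp θ (hlin θ))).mul_const lam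
    have htot := hmul.sub hc
    have hODE := ode_S h0' h1 (sin_mem_ball hθ)
    have hcs : Real.sin θ^2 + Real.cos θ^2 = 1 := Real.sin_sq_add_cos_sq θ
    have hval : (∑' k, aSin lam k * ((2*(k:ℝ)+1) * ((2*(k:ℝ)) * (Real.sin θ)^(2*k-1))))
          * Real.cos θ * Real.cos θ
        + (∑' k, aSin lam k * ((2*(k:ℝ)+1) * (Real.sin θ)^(2*k))) * (-Real.sin θ)
        - (-Real.sin (lam*θ) * lam) * lam
        = -(lam^2) * u θ := by
      simp only [hu]
      linear_combination hODE + (∑' k, aSin lam k * ((2*(k:ℝ)+1) * ((2*(k:ℝ)) * (Real.sin θ)^(2*k-1)))) * hcs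
    simp only [Function.comp] at htot
    rw [hval] at htot
    rw [hu1]
    exact htot
  have hE' : ∀ θ ∈ I, HasDerivAt E 0 θ := by
    intro θ hθ
    have h1' := ((hu1' θ hθ).pow 2)
    have h2' := (((hu' θ hθ).pow 2)).const_mul (lam^2)
    have := h1'.add h2'
    refine HasDerivAt.congr_deriv this ?_
    push_cast
    ring
  have hE0 : E 0 = 0 := by
    have hz : (fun k => aSin lam k * (Real.sin 0)^(2*k+1)) = fun _ => (0:ℝ) := by
      funext k; rw [Real.sin_zero, zero_pow (by omega)]; ring
    have hG10 : (∑' k, aSin lam k * ((2*(k:ℝ)+1) * (Real.sin 0)^(2*k))) = lam := by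
      rw [Real.sin_zero]
      rw [tsum_eq_single 0 (fun b hb => by rw [zero_pow (by omega)]; ring)]
      norm_num [aSin]
    simp only [hE, hu, hu1, hG10, hz]
    norm_num
  have hpi : (0:ℝ) < π/2 := by positivity
  have hEconst : ∀ θ ∈ I, E θ = 0 := by
    intro θ hθ
    rcases le_or_gt 0 θ with hpos | hneg
    · have hsub : Set.Icc (0:ℝ) θ ⊆ I := fun t ht =>
        ⟨by linarith [ht.1], lt_of_le_of_lt ht.2 hθ.2⟩
      have key := constant_of_has_deriv_right_zero (f := E) (a := 0) (b := θ)
        (fun t ht => (hE' t (hsub ht)).continuousAt.continuousWithinAt)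
        (fun t ht => (hE' t (hsub (Set.Ico_subset_Icc_self ht))).hasDerivWithinAt)
      have := key θ ⟨hpos, le_refl θ⟩
      rwa [hE0] at this
    · have hsub : Set.Icc θ (0:ℝ) ⊆ I := fun t ht =>
        ⟨lt_of_lt_of_le hθ.1 ht.1, lt_of_le_of_lt ht.2 hpi⟩
      have key := constant_of_has_deriv_right_zero (f := E) (a := θ) (b := 0)
        (fun t ht => (hE' t (hsub ht)).continuousAt.continuousWithinAt)
        (fun t ht => (hE' t (hsub (Set.Ico_subset_Icc_self ht))).hasDerivWithinAt)
      have := key 0 ⟨hneg.le, le_refl 0⟩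
      rw [hE0] at this
      exact this.symm
  intro θ hθ
  have hEθ := hEconst θ hθ
  have husq : u θ ^ 2 = 0 := by
    have h1'' : u1 θ^2 + lam^2 * u θ^2 = 0 := hEθ
    nlinarith [sq_nonneg (u1 θ), sq_nonneg (u θ), sq_nonneg lam, mul_pos h0 h0]
  have := pow_eq_zero_iff (n := 2) (by norm_num) |>.mp husq
  have huθ : u θ = 0 := this
  simp only [hu] at huθ
  linarith [huθ]

lemma aSin_zero_lam : ∀ k, aSin 0 k = 0 := by
  intro k
  induction k with
  | zero => rfl
  | succ k ih => rw [aSin, ih]; ring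

lemma gval (h0 : 0 ≤ lam) (h1 : lam ≤ 1) {x : ℝ} (hx : |x| < 1) :
    (∑' k, aSin lam k * x^(2*k+1)) = Real.sin (lam * Real.arcsin x) := by
  rcases eq_or_lt_of_le h0 with rfl | hpos
  · simp [aSin_zero_lam]
  · have hx1 : -1 < x := by rw [abs_lt] at hx; exact hx.1
    have hx2 : x < 1 := by rw [abs_lt] at hx; exact hx.2
    have hθ : Real.arcsin x ∈ Set.Ioo (-(π/2)) (π/2) :=
      ⟨Real.neg_pi_div_two_lt_arcsin.mpr hx1, Real.arcsin_lt_pi_div_two.mpr hx2⟩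
    have := u_eq_zero hpos h1 (Real.arcsin x) hθ
    rwa [Real.sin_arcsin hx1.le hx2.le] at this

lemma aSin_hasSum (h0 : 0 ≤ lam) (h1 : lam ≤ 1) :
    HasSum (aSin lam) (Real.sin (π * lam / 2)) := by
  have hs1 : Real.sin (π * lam / 2) = Real.sin (lam * (π/2)) := by ring_nf
  have hpi : (0:ℝ) < π/2 := by positivity
  -- partial sums are bounded by s
  have hub : ∀ x ∈ Set.Ico (0:ℝ) 1, Real.sin (lam * Real.arcsin x) ≤ Real.sin (lam * (π/2)) := by
    intro x hx
    have ha0 : 0 ≤ Real.arcsin x := Real.arcsin_nonneg.mpr hx.1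
    have ha2 : Real.arcsin x ≤ π/2 := Real.arcsin_le_pi_div_two x
    apply Real.strictMonoOn_sin.monotoneOn
    · constructor <;> nlinarith
    · constructor <;> nlinarith
    · nlinarith
  have hbd : ∀ N, ∑ k ∈ range N, aSin lam k ≤ Real.sin (lam * (π/2)) := by
    intro N
    have hev : ∀ᶠ x in nhdsWithin (1:ℝ) (Set.Iio 1),
        ∑ k ∈ range N, aSin lam k * x^(2*k+1) ≤ Real.sin (lam * (π/2)) := by
      filter_upwards [Ico_mem_nhdsLT_of_mem (by norm_num : (1:ℝ) ∈ Set.Ioc (0:ℝ) 1)]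
        with x hx
      have hxabs : |x| < 1 := by rw [abs_lt]; exact ⟨by linarith [hx.1], hx.2⟩
      calc ∑ k ∈ range N, aSin lam k * x^(2*k+1)
          ≤ ∑' k, aSin lam k * x^(2*k+1) := by
            exact Summable.sum_le_tsum (range N)
              (fun k _ => mul_nonneg (aSin_nonneg h0 h1 k) (pow_nonneg hx.1 _))
              (summable_S0 h0 h1 hxabs)
        _ = Real.sin (lam * Real.arcsin x) := gval h0 h1 hxabs
        _ ≤ Real.sin (lam * (π/2)) := hub x hx
    have hlim : Filter.Tendsto (fun x : ℝ => ∑ k ∈ range N, aSin lam k * x^(2*k+1))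
        (nhdsWithin (1:ℝ) (Set.Iio 1)) (nhds (∑ k ∈ range N, aSin lam k)) := by
      have hcont : Filter.Tendsto (fun x : ℝ => ∑ k ∈ range N, aSin lam k * x^(2*k+1))
          (nhds 1) (nhds (∑ k ∈ range N, aSin lam k * (1:ℝ)^(2*k+1))) := by
        apply Continuous.tendsto
        exact continuous_finset_sum _ (fun k _ => (continuous_const.mul (continuous_pow _)))
      simp only [one_pow, mul_one] at hcont
      exact hcont.mono_left nhdsWithin_le_nhds
    exact le_of_tendsto hlim hev
  have hsummable : Summable (aSin lam) :=
    summable_of_sum_range_le (fun k => aSin_nonneg h0 h1 k) hbd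
  have hT_le : ∑' k, aSin lam k ≤ Real.sin (lam * (π/2)) :=
    Summable.tsum_le_of_sum_range_le hsummable hbd
  have hle_T : Real.sin (lam * (π/2)) ≤ ∑' k, aSin lam k := by
    have hev : ∀ᶠ x in nhdsWithin (1:ℝ) (Set.Iio 1),
        Real.sin (lam * Real.arcsin x) ≤ ∑' k, aSin lam k := by
      filter_upwards [Ico_mem_nhdsLT_of_mem (by norm_num : (1:ℝ) ∈ Set.Ioc (0:ℝ) 1)]
        with x hx
      have hxabs : |x| < 1 := by rw [abs_lt]; exact ⟨by linarith [hx.1], hx.2⟩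
      rw [← gval h0 h1 hxabs]
      apply Summable.tsum_le_tsum _ (summable_S0 h0 h1 hxabs) hsummable
      intro k
      have hx1 : x^(2*k+1) ≤ 1 := pow_le_one₀ hx.1 hx.2.le
      have := aSin_nonneg h0 h1 k
      nlinarith [this, hx1]
    have hlim : Filter.Tendsto (fun x : ℝ => Real.sin (lam * Real.arcsin x))
        (nhdsWithin (1:ℝ) (Set.Iio 1)) (nhds (Real.sin (lam * (π/2)))) := by
      have hcont : Continuous (fun x : ℝ => Real.sin (lam * Real.arcsin x)) :=
        Real.continuous_sin.comp (continuous_const.mul Real.continuous_arcsin)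
      have := (hcont.tendsto 1).mono_left
        (nhdsWithin_le_nhds (s := Set.Iio (1:ℝ)))
      rwa [Real.arcsin_one] at this
    exact le_of_tendsto hlim hev
  have : ∑' k, aSin lam k = Real.sin (π * lam / 2) := by
    rw [hs1]; exact le_antisymm hT_le hle_T
  rw [← this]
  exact hsummable.hasSum

lemma posSemidef_smul_nonneg {A : Matrix (Fin n) (Fin n) ℝ} (hA : A.PosSemidef) {c : ℝ}
    (hc : 0 ≤ c) : (c • A).PosSemidef := by
  rw [Matrix.posSemidef_iff_dotProduct_mulVec]
  constructor
  · rw [Matrix.IsHermitian, conjTranspose_smul, hA.1.eq, star_trivial]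
  · intro v
    rw [smul_mulVec, dotProduct_smul, smul_eq_mul]
    exact mul_nonneg hc (hA.dotProduct_mulVec_nonneg v)

lemma psd_entry_symm {A : Matrix (Fin n) (Fin n) ℝ} (hA : A.PosSemidef) (i j : Fin n) :
    A j i = A i j := by
  have := hA.1.apply i j
  rwa [star_trivial] at this

lemma schur_product {A B : Matrix (Fin n) (Fin n) ℝ} (hA : A.PosSemidef) (hB : B.PosSemidef) :
    (Matrix.of fun i j => A i j * B i j).PosSemidef := by
  obtain ⟨C, hC⟩ : ∃ C : Matrix (Fin n) (Fin n) ℝ, A = Cᴴ * C := by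
    open scoped MatrixOrder in
    obtain ⟨B, rfl⟩ := CStarAlgebra.nonneg_iff_eq_star_mul_self.mp hA.nonneg
    exact ⟨B, rfl⟩
  have hAentry : ∀ i j, A i j = ∑ k, C k i * C k j := by
    intro i j
    rw [hC]
    simp [Matrix.mul_apply, Matrix.conjTranspose_apply]
  rw [Matrix.posSemidef_iff_dotProduct_mulVec]
  constructor
  · apply Matrix.IsHermitian.ext
    intro i j
    rw [star_trivial, Matrix.of_apply, Matrix.of_apply,
      psd_entry_symm hA j i, psd_entry_symm hB j i]
  · intro v
    have key : (star v) ⬝ᵥ ((Matrix.of fun i j => A i j * B i j) *ᵥ v)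
        = ∑ k, (star (fun i => v i * C k i)) ⬝ᵥ (B *ᵥ (fun i => v i * C k i)) := by
      simp only [dotProduct, Matrix.mulVec, Matrix.of_apply, Pi.star_apply, star_trivial]
      have lhs_eq : (∑ i, v i * ∑ j, A i j * B i j * v j)
          = ∑ i, ∑ j, ∑ k, v i * C k i * (B i j * (v j * C k j)) := by
        refine Finset.sum_congr rfl fun i _ => ?_
        rw [Finset.mul_sum]
        refine Finset.sum_congr rfl fun j _ => ?_
        rw [hAentry i j, Finset.sum_mul, Finset.sum_mul, Finset.mul_sum]
        refine Finset.sum_congr rfl fun k _ => ?_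
        ring
      have rhs_eq : (∑ k, ∑ i, v i * C k i * ∑ j, B i j * (v j * C k j))
          = ∑ k, ∑ i, ∑ j, v i * C k i * (B i j * (v j * C k j)) := by
        refine Finset.sum_congr rfl fun k _ => Finset.sum_congr rfl fun i _ => ?_
        rw [Finset.mul_sum]
      rw [lhs_eq, rhs_eq]
      calc ∑ i, ∑ j, ∑ k, v i * C k i * (B i j * (v j * C k j))
          = ∑ i, ∑ k, ∑ j, v i * C k i * (B i j * (v j * C k j)) :=
            Finset.sum_congr rfl fun i _ => Finset.sum_comm
        _ = ∑ k, ∑ i, ∑ j, v i * C k i * (B i j * (v j * C k j)) := Finset.sum_comm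
    rw [key]
    exact Finset.sum_nonneg fun k _ => hB.dotProduct_mulVec_nonneg _

lemma oddPow_psd {X : Matrix (Fin n) (Fin n) ℝ} (hX : X.PosSemidef) (k : ℕ) :
    (Matrix.of fun i j => X i j ^ (2*k+1)).PosSemidef := by
  induction k with
  | zero =>
    convert hX using 1
    ext i j
    simp
  | succ k ih =>
    have h2 := schur_product hX hX
    have h3 := schur_product ih h2
    have : (Matrix.of fun i j => (Matrix.of fun i j => X i j ^ (2*k+1)) i j
        * (Matrix.of fun i j => X i j * X i j) i j)
        = (Matrix.of fun i j => X i j ^ (2*(k+1)+1)) := by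
      ext i j
      simp only [Matrix.of_apply]
      ring
    rwa [this] at h3

lemma psd_entry_le_one {X : Matrix (Fin n) (Fin n) ℝ} (hX : X.PosSemidef)
    (hXd : ∀ i, X i i = 1) (i j : Fin n) : |X i j| ≤ 1 := by
  rcases eq_or_ne i j with rfl | hij
  · rw [hXd i]; norm_num
  · rw [abs_le]
    constructor
    · have h := hX.dotProduct_mulVec_nonneg ((Pi.single i 1) + (Pi.single j 1))
      have hexp : (star ((Pi.single i (1:ℝ)) + (Pi.single j 1))) ⬝ᵥ
          (X *ᵥ ((Pi.single i 1) + (Pi.single j 1))) = 2 + 2 * X i j := by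
        rw [star_trivial]
        rw [Matrix.mulVec_add, dotProduct_add, add_dotProduct,
          add_dotProduct]
        rw [Matrix.mulVec_single_one, Matrix.mulVec_single_one]
        simp only [single_dotProduct, Matrix.col_apply, mul_one, one_mul]
        rw [hXd i, hXd j, psd_entry_symm hX i j]
        ring
      rw [hexp] at h
      linarith
    · have h := hX.dotProduct_mulVec_nonneg ((Pi.single i 1) - (Pi.single j 1))
      have hexp : (star ((Pi.single i (1:ℝ)) - (Pi.single j 1))) ⬝ᵥ
          (X *ᵥ ((Pi.single i 1) - (Pi.single j 1))) = 2 - 2 * X i j := by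
        rw [star_trivial]
        rw [Matrix.mulVec_sub, dotProduct_sub, sub_dotProduct,
          sub_dotProduct]
        rw [Matrix.mulVec_single_one, Matrix.mulVec_single_one]
        simp only [single_dotProduct, Matrix.col_apply, mul_one, one_mul]
        rw [hXd i, hXd j, psd_entry_symm hX i j]
        ring
      rw [hexp] at h
      linarith

lemma hasSum_closed (h0 : 0 ≤ lam) (h1 : lam ≤ 1) {x : ℝ} (hx : |x| ≤ 1) :
    HasSum (fun k => aSin lam k * x^(2*k+1)) (Real.sin (lam * Real.arcsin x)) := by
  have hsummable : Summable (fun k => aSin lam k * x^(2*k+1)) := by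
    refine Summable.of_norm_bounded (aSin_hasSum h0 h1).summable fun k => ?_
    have hk := aSin_nonneg h0 h1 k
    rw [Real.norm_eq_abs, abs_mul, abs_of_nonneg hk, abs_pow]
    have : |x|^(2*k+1) ≤ 1 := pow_le_one₀ (abs_nonneg x) hx
    nlinarith
  rcases lt_or_eq_of_le hx with hlt | heq
  · have := gval h0 h1 hlt
    rw [← this]
    exact hsummable.hasSum
  · rcases abs_eq (by norm_num : (0:ℝ) ≤ 1) |>.mp heq with rfl | rfl
    · have : (fun k => aSin lam k * (1:ℝ)^(2*k+1)) = aSin lam := by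
        funext k; rw [one_pow, mul_one]
      rw [this, Real.arcsin_one]
      have : lam * (π/2) = π * lam / 2 := by ring
      rw [this]
      exact aSin_hasSum h0 h1
    · have hfun : (fun k => aSin lam k * (-1:ℝ)^(2*k+1)) = fun k => -(aSin lam k) := by
        funext k
        rw [Odd.neg_one_pow ⟨k, by ring⟩]
        ring
      rw [hfun, Real.arcsin_neg_one]
      have : lam * -(π/2) = -(π * lam / 2) := by ring
      rw [this, Real.sin_neg]
      exact (aSin_hasSum h0 h1).neg

/-- For `λ ∈ [0,1]` and `X ∈ SR` (symmetric PSD with unit diagonal),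
the matrix `f_λ(X) + (1 - sin (π λ / 2)) • I` is positive semidefinite, where
`f_λ(X)` has entries `sin (λ * arcsin (X i j))`. -/
theorem entrywise_sin_lambda_arcsin_add_identity_posSemidef (n : ℕ) (hn : 0 < n)
    (lam : ℝ) (hlam : lam ∈ Set.Icc (0 : ℝ) 1)
    (X : Matrix (Fin n) (Fin n) ℝ) (hX : X.PosSemidef) (hXd : ∀ i, X i i = 1) :
    ((Matrix.of fun i j => Real.sin (lam * Real.arcsin (X i j)))
      + (1 - Real.sin (Real.pi * lam / 2)) • (1 : Matrix (Fin n) (Fin n) ℝ)).PosSemidef := by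
  obtain ⟨h0, h1⟩ := hlam
  have hsumA := aSin_hasSum h0 h1
  have hPle : ∀ N, ∑ k ∈ range N, aSin lam k ≤ Real.sin (π * lam / 2) := fun N =>
    sum_le_hasSum (range N) (fun k _ => aSin_nonneg h0 h1 k) hsumA
  rw [Matrix.posSemidef_iff_dotProduct_mulVec]
  constructor
  · apply Matrix.IsHermitian.ext
    intro i j
    rw [star_trivial]
    simp only [Matrix.add_apply, Matrix.smul_apply, Matrix.of_apply, smul_eq_mul]
    rw [psd_entry_symm hX i j]
    congr 1
    by_cases h : i = j
    · subst h; rfl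
    · rw [Matrix.one_apply_ne h, Matrix.one_apply_ne (Ne.symm h)]
  · intro v
    -- partial matrices
    set P : ℕ → ℝ := fun N => ∑ k ∈ range N, aSin lam k with hP
    set MN : ℕ → Matrix (Fin n) (Fin n) ℝ := fun N => Matrix.of (fun i j =>
      (∑ k ∈ range N, aSin lam k * X i j ^ (2*k+1)) + (1 - P N) * (1 : Matrix (Fin n) (Fin n) ℝ) i j) with hMN
    have hPSD : ∀ N, (MN N).PosSemidef := by
      intro N
      have hdecomp : MN N = (∑ k ∈ range N, aSin lam k • Matrix.of (fun i j => X i j ^ (2*k+1)))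
          + (1 - P N) • (1 : Matrix (Fin n) (Fin n) ℝ) := by
        ext i j
        simp only [hMN, Matrix.of_apply, Matrix.add_apply, Matrix.smul_apply, smul_eq_mul,
          Matrix.sum_apply]
      rw [hdecomp]
      refine Matrix.PosSemidef.add ?_ (posSemidef_smul_nonneg Matrix.PosSemidef.one
        (by linarith [hPle N, Real.sin_le_one (π * lam / 2)]))
      refine Finset.sum_induction _ _ (fun a b ha hb => ha.add hb) Matrix.PosSemidef.zero ?_
      intro k _
      exact posSemidef_smul_nonneg (oddPow_psd hX k) (aSin_nonneg h0 h1 k)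
    have hnn : ∀ N, 0 ≤ ∑ i, v i * ∑ j, (MN N) i j * v j := by
      intro N
      have := (hPSD N).dotProduct_mulVec_nonneg v
      simpa [dotProduct, Matrix.mulVec, star_trivial] using this
    have htend : Filter.Tendsto (fun N => ∑ i, v i * ∑ j, (MN N) i j * v j)
        Filter.atTop (nhds (∑ i, v i * ∑ j,
          (Real.sin (lam * Real.arcsin (X i j)) + (1 - Real.sin (π * lam / 2))
            * (1 : Matrix (Fin n) (Fin n) ℝ) i j) * v j)) := by
      apply tendsto_finset_sum
      intro i _
      apply Filter.Tendsto.const_mul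
      apply tendsto_finset_sum
      intro j _
      apply Filter.Tendsto.mul_const
      simp only [hMN, Matrix.of_apply]
      have hT1 : Filter.Tendsto (fun N => ∑ k ∈ range N, aSin lam k * X i j ^ (2*k+1))
          Filter.atTop (nhds (Real.sin (lam * Real.arcsin (X i j)))) :=
        (hasSum_closed h0 h1 (psd_entry_le_one hX hXd i j)).tendsto_sum_nat
      have hT2 : Filter.Tendsto (fun N => (1 - P N) * (1 : Matrix (Fin n) (Fin n) ℝ) i j)
          Filter.atTop (nhds ((1 - Real.sin (π * lam / 2)) * (1 : Matrix (Fin n) (Fin n) ℝ) i j)) :=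
        (Filter.Tendsto.sub tendsto_const_nhds hsumA.tendsto_sum_nat).mul_const _
      exact hT1.add hT2
    have hfinal := ge_of_tendsto' htend hnn
    simpa [dotProduct, Matrix.mulVec, star_trivial, Matrix.add_apply, Matrix.smul_apply,
      smul_eq_mul, Matrix.of_apply] using hfinal
end

section
/- Let λ be a real number and define the sequence (a_n(λ))_{n∈ℕ} by a_0(λ) = 0, a_1(λ) = λ, and a_{n+2}(λ) = ((n² − λ²)/((n+2)(n+1)))·a_n(λ) for all n ≥ 0. Then for every x ∈ (−1,1), the power series Σ_{n≥0} a_n(λ)·x^n converges and its sum equals sin(λ·arcsin(x)). -/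
set_option maxHeartbeats 1000000

open Real

/-- The sequence defined by `a 0 = 0`, `a 1 = λ`, and
`a (n+2) = ((n² - λ²)/((n+2)(n+1))) * a n` gives, for every `x ∈ (-1,1)`, a
convergent power series `Σ a n * x^n` whose sum is `sin (λ * arcsin x)`. -/
theorem sin_lambda_arcsin_powerSeries (lam : ℝ) (a : ℕ → ℝ)
    (h0 : a 0 = 0) (h1 : a 1 = lam)
    (hrec : ∀ n : ℕ, a (n + 2) = (((n : ℝ) ^ 2 - lam ^ 2) / (((n : ℝ) + 2) * ((n : ℝ) + 1))) * a n)
    (x : ℝ) (hx : x ∈ Set.Ioo (-1 : ℝ) 1) :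
    HasSum (fun n : ℕ => a n * x ^ n) (Real.sin (lam * Real.arcsin x)) := by
  obtain ⟨hx1, hx2⟩ := hx
  have hxabs : |x| < 1 := abs_lt.2 ⟨hx1, hx2⟩
  set r : ℝ := (|x| + 1) / 2 with hrdef
  have hxr : |x| < r := by rw [hrdef]; linarith
  have hr1 : r < 1 := by rw [hrdef]; linarith
  have hrhalf : (1 / 2 : ℝ) ≤ r := by rw [hrdef]; have := abs_nonneg x; linarith
  have hr0 : 0 < r := by linarith
  -- Step 1 : uniform bound on the coefficients
  obtain ⟨C, hC0, hC⟩ : ∃ C : ℝ, 0 ≤ C ∧ ∀ n, |a n| ≤ C := by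
    set N : ℕ := ⌈lam ^ 2⌉₊ with hN
    have key : ∀ m : ℕ, N ≤ m → |a (m + 2)| ≤ |a m| := by
      intro m hm
      have h2 : (0 : ℝ) < ((m : ℝ) + 2) * ((m : ℝ) + 1) := by positivity
      have hlam : lam ^ 2 ≤ (m : ℝ) := le_trans (Nat.le_ceil _) (by exact_mod_cast hm)
      have hm0 : (0 : ℝ) ≤ (m : ℝ) := Nat.cast_nonneg m
      have hfac : |((m : ℝ) ^ 2 - lam ^ 2) / (((m : ℝ) + 2) * ((m : ℝ) + 1))| ≤ 1 := by
        rw [abs_div, abs_of_pos h2, div_le_one h2]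
        rw [abs_le]
        constructor <;> nlinarith
      rw [hrec m, abs_mul]
      calc |((m : ℝ) ^ 2 - lam ^ 2) / (((m : ℝ) + 2) * ((m : ℝ) + 1))| * |a m|
          ≤ 1 * |a m| := mul_le_mul_of_nonneg_right hfac (abs_nonneg _)
        _ = |a m| := one_mul _
    have hne : (Finset.range (N + 2)).Nonempty := ⟨0, by simp⟩
    set C : ℝ := (Finset.range (N + 2)).sup' hne (fun i => |a i|) with hCdef
    refine ⟨C, le_trans (abs_nonneg (a 0)) (Finset.le_sup' (fun i => |a i|) (Finset.mem_range.2 (Nat.succ_pos (N+1)))), ?_⟩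
    intro n
    induction n using Nat.strong_induction_on with
    | _ n ih =>
      by_cases h : n < N + 2
      · exact Finset.le_sup' (fun i => |a i|) (Finset.mem_range.2 h)
      · obtain ⟨m, rfl⟩ : ∃ m, n = m + 2 := ⟨n - 2, by omega⟩
        exact le_trans (key m (by omega)) (ih m (by omega))
  -- geometric-type summability
  have hrabs : ‖r‖ < 1 := by rw [Real.norm_eq_abs, abs_of_pos hr0]; exact hr1
  have hgeom : Summable (fun n : ℕ => ((n : ℝ) + 1) ^ 2 * r ^ n) := by
    have h2 := summable_pow_mul_geometric_of_norm_lt_one 2 hrabs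
    have h1 := summable_pow_mul_geometric_of_norm_lt_one 1 hrabs
    have hg0 := summable_pow_mul_geometric_of_norm_lt_one 0 hrabs
    have := (h2.add ((h1.mul_left 2).add hg0))
    refine this.congr (fun n => ?_)
    ring
  have master : ∀ (c : ℕ → ℝ) (A : ℝ), (∀ n, |c n| ≤ A * (((n : ℝ) + 1) ^ 2 * r ^ n)) →
      Summable c := by
    intro c A h
    exact Summable.of_norm_bounded (hgeom.mul_left A) (by simpa using h)
  -- powers of r
  have hpow : ∀ n k : ℕ, r ^ (n - k) ≤ 2 ^ k * r ^ n := by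
    intro n k
    have h2 : r ^ (n - k + k) ≤ r ^ n :=
      pow_le_pow_of_le_one hr0.le hr1.le (by omega)
    have h3 : (1 : ℝ) ≤ r ^ k * 2 ^ k := by
      rw [← mul_pow]
      calc (1 : ℝ) = 1 ^ k := (one_pow k).symm
        _ ≤ (r * 2) ^ k := pow_le_pow_left₀ (by norm_num) (by linarith) k
    calc r ^ (n - k) = r ^ (n - k) * 1 := (mul_one _).symm
      _ ≤ r ^ (n - k) * (r ^ k * 2 ^ k) := by
          exact mul_le_mul_of_nonneg_left h3 (by positivity)
      _ = r ^ (n - k + k) * 2 ^ k := by rw [pow_add]; ring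
      _ ≤ r ^ n * 2 ^ k := mul_le_mul_of_nonneg_right h2 (by positivity)
      _ = 2 ^ k * r ^ n := mul_comm _ _
  -- membership facts
  have hopen : IsOpen (Set.Ioo (-r) r) := isOpen_Ioo
  have hconn : IsPreconnected (Set.Ioo (-r) r) := isPreconnected_Ioo
  have h0mem : (0:ℝ) ∈ Set.Ioo (-r) r := ⟨by linarith, hr0⟩
  have hmemabs : ∀ y ∈ Set.Ioo (-r) r, |y| ≤ r := fun y hy => (abs_lt.2 ⟨hy.1, hy.2⟩).le
  have hpowy : ∀ (y : ℝ), |y| ≤ r → ∀ n k : ℕ, |y| ^ (n - k) ≤ 2 ^ k * r ^ n := by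
    intro y hy n k
    exact le_trans (pow_le_pow_left₀ (abs_nonneg y) hy _) (hpow n k)
  -- generic summability
  have genbd : ∀ (b : ℕ → ℝ) (A : ℝ) (y : ℝ), |y| ≤ r →
      (∀ n, |b n| ≤ A * ((n:ℝ)+1)^2) → Summable (fun (n : ℕ) => b n * (a n * y ^ n)) := by
    intro b A y hy hb
    apply master _ (A * C)
    intro n
    rw [abs_mul, abs_mul, abs_pow]
    have hpy : |y| ^ n ≤ r ^ n := pow_le_pow_left₀ (abs_nonneg y) hy n
    have hA : 0 ≤ A * ((n:ℝ)+1)^2 := le_trans (abs_nonneg _) (hb n)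
    calc |b n| * (|a n| * |y| ^ n) ≤ (A * ((n:ℝ)+1)^2) * (C * r ^ n) := by
          apply mul_le_mul (hb n) _ (by positivity) hA
          exact mul_le_mul (hC n) hpy (by positivity) hC0
      _ = (A * C) * (((n:ℝ)+1)^2 * r ^ n) := by ring
  -- summability of the basic series
  have sumU : ∀ y : ℝ, |y| ≤ r → Summable (fun (n : ℕ) => a n * y ^ n) := by
    intro y hy
    have := genbd (fun _ => 1) 1 y hy (fun n => by
      rw [abs_one]; nlinarith [Nat.cast_nonneg (α := ℝ) n])
    simpa using this
  -- bounds for the derivative terms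
  have bound1 : ∀ (y : ℝ), |y| ≤ r → ∀ n : ℕ,
      |(n:ℝ) * a n * y ^ (n-1)| ≤ (2*C) * (((n:ℝ)+1)^2 * r ^ n) := by
    intro y hy n
    rw [abs_mul, abs_mul, abs_pow, Nat.abs_cast]
    have h1 := hpowy y hy n 1
    have h2 := hC n
    have hn0 : (0:ℝ) ≤ (n:ℝ) := Nat.cast_nonneg n
    have hrn : (0:ℝ) ≤ r ^ n := by positivity
    calc (n:ℝ) * |a n| * |y| ^ (n-1) ≤ (n:ℝ) * C * (2 * r ^ n) := by
          apply mul_le_mul _ (by simpa using h1) (by positivity) (by positivity)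
          exact mul_le_mul_of_nonneg_left h2 hn0
      _ ≤ (2*C) * (((n:ℝ)+1)^2 * r ^ n) := by nlinarith [mul_nonneg hC0 hrn, sq_nonneg ((n:ℝ)+1), mul_nonneg (mul_nonneg hC0 hrn) hn0]
  have bound2 : ∀ (y : ℝ), |y| ≤ r → ∀ n : ℕ,
      |(n:ℝ) * ((n-1:ℕ):ℝ) * a n * y ^ (n-2)| ≤ (4*C) * (((n:ℝ)+1)^2 * r ^ n) := by
    intro y hy n
    rw [abs_mul, abs_mul, abs_mul, Nat.abs_cast, Nat.abs_cast, abs_pow]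
    have h1 := hpowy y hy n 2
    have h2 := hC n
    have hn0 : (0:ℝ) ≤ (n:ℝ) := Nat.cast_nonneg n
    have hm : ((n-1:ℕ):ℝ) ≤ (n:ℝ) := Nat.cast_le.2 (Nat.sub_le n 1)
    have hm0 : (0:ℝ) ≤ ((n-1:ℕ):ℝ) := Nat.cast_nonneg _
    have hrn : (0:ℝ) ≤ r ^ n := by positivity
    calc (n:ℝ) * ((n-1:ℕ):ℝ) * |a n| * |y| ^ (n-2)
        ≤ (n:ℝ) * (n:ℝ) * C * (4 * r ^ n) := by
          apply mul_le_mul _ (by norm_num at h1 ⊢; linarith) (by positivity) (by positivity)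
          apply mul_le_mul _ h2 (abs_nonneg _) (by positivity)
          exact mul_le_mul_of_nonneg_left hm hn0
      _ ≤ (4*C) * (((n:ℝ)+1)^2 * r ^ n) := by nlinarith [mul_nonneg hC0 hrn, mul_nonneg (mul_nonneg hC0 hrn) hn0, mul_nonneg (mul_nonneg (mul_nonneg hC0 hrn) hn0) hn0]
  -- derivative of the series U
  have hUderiv : ∀ y ∈ Set.Ioo (-r) r, HasDerivAt (fun z => ∑' (n : ℕ), a n * z ^ n)
      (∑' (n : ℕ), (n:ℝ) * a n * y ^ (n-1)) y := by
    intro y hy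
    have hder : ∀ (n : ℕ), ∀ z ∈ Set.Ioo (-r) r,
        HasDerivAt (fun w => a n * w ^ n) ((n:ℝ) * a n * z ^ (n-1)) z := by
      intro n z _
      have := (hasDerivAt_pow n z).const_mul (a n)
      refine this.congr_deriv ?_
      ring
    have hbd : ∀ (n : ℕ), ∀ z ∈ Set.Ioo (-r) r,
        ‖(n:ℝ) * a n * z ^ (n-1)‖ ≤ (2*C) * (((n:ℝ)+1)^2 * r ^ n) := by
      intro n z hz
      rw [Real.norm_eq_abs]
      exact bound1 z (hmemabs z hz) n
    exact hasDerivAt_tsum_of_isPreconnected (g := fun (n : ℕ) (z : ℝ) => a n * z ^ n)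
      (g' := fun (n : ℕ) (z : ℝ) => (n:ℝ) * a n * z ^ (n-1)) (hgeom.mul_left (2*C)) hopen hconn
      hder hbd h0mem (sumU 0 (by rw [abs_zero]; exact hr0.le)) hy
  -- derivative of the series G
  have hGderiv : ∀ y ∈ Set.Ioo (-r) r,
      HasDerivAt (fun z => ∑' (n : ℕ), (n:ℝ) * a n * z ^ (n-1))
      (∑' (n : ℕ), (n:ℝ) * ((n-1:ℕ):ℝ) * a n * y ^ (n-2)) y := by
    intro y hy
    have sG0 : Summable (fun (n : ℕ) => (n:ℝ) * a n * (0:ℝ) ^ (n-1)) := by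
      apply master _ (2*C)
      intro n
      exact bound1 0 (by rw [abs_zero]; exact hr0.le) n
    have hder : ∀ (n : ℕ), ∀ z ∈ Set.Ioo (-r) r,
        HasDerivAt (fun w => (n:ℝ) * a n * w ^ (n-1)) ((n:ℝ) * ((n-1:ℕ):ℝ) * a n * z ^ (n-2)) z := by
      intro n z _
      have := (hasDerivAt_pow (n-1) z).const_mul ((n:ℝ) * a n)
      have hsub : n - 1 - 1 = n - 2 := by omega
      rw [hsub] at this
      refine this.congr_deriv ?_
      ring
    have hbd : ∀ (n : ℕ), ∀ z ∈ Set.Ioo (-r) r,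
        ‖(n:ℝ) * ((n-1:ℕ):ℝ) * a n * z ^ (n-2)‖ ≤ (4*C) * (((n:ℝ)+1)^2 * r ^ n) := by
      intro n z hz
      rw [Real.norm_eq_abs]
      exact bound2 z (hmemabs z hz) n
    exact hasDerivAt_tsum_of_isPreconnected (g := fun (n : ℕ) (z : ℝ) => (n:ℝ) * a n * z ^ (n-1))
      (g' := fun (n : ℕ) (z : ℝ) => (n:ℝ) * ((n-1:ℕ):ℝ) * a n * z ^ (n-2)) (hgeom.mul_left (4*C)) hopen hconn
      hder hbd h0mem sG0 hy
  -- the ODE identity satisfied by the series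
  have hkey : ∀ y ∈ Set.Ioo (-r) r,
      (∑' (n : ℕ), (n:ℝ) * ((n-1:ℕ):ℝ) * a n * y ^ (n-2)) =
      (y * (∑' (n : ℕ), (n:ℝ) * a n * y ^ (n-1)) -
        lam^2 * (∑' (n : ℕ), a n * y ^ n)) / (1 - y^2) := by
    intro y hy
    have hyr : |y| ≤ r := hmemabs y hy
    have hy2 : (0:ℝ) < 1 - y^2 := by nlinarith [sq_abs y, abs_nonneg y]
    have sF2 : Summable (fun (n : ℕ) => (n:ℝ) * ((n-1:ℕ):ℝ) * a n * y ^ (n-2)) :=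
      master _ (4*C) (fun n => bound2 y hyr n)
    have sUy : Summable (fun (n : ℕ) => a n * y ^ n) := sumU y hyr
    have s1 : Summable (fun (n : ℕ) => (n:ℝ) * (a n * y ^ n)) :=
      genbd _ 1 y hyr (fun n => by
        rw [Nat.abs_cast]; nlinarith [Nat.cast_nonneg (α := ℝ) n])
    have s2 : Summable (fun (n : ℕ) => ((n:ℝ) * ((n-1:ℕ):ℝ)) * (a n * y ^ n)) := by
      apply genbd _ 1 y hyr
      intro n
      have hm : ((n-1:ℕ):ℝ) ≤ (n:ℝ) := Nat.cast_le.2 (Nat.sub_le n 1)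
      have hm0 : (0:ℝ) ≤ ((n-1:ℕ):ℝ) := Nat.cast_nonneg _
      have hn0 : (0:ℝ) ≤ (n:ℝ) := Nat.cast_nonneg n
      rw [abs_mul, Nat.abs_cast, Nat.abs_cast]
      nlinarith
    have sA : Summable (fun (n : ℕ) => ((n:ℝ)^2 - lam^2) * (a n * y ^ n)) := by
      apply genbd _ (1 + lam^2) y hyr
      intro n
      have hn0 : (0:ℝ) ≤ (n:ℝ) := Nat.cast_nonneg n
      rw [abs_le]
      constructor <;> nlinarith [sq_nonneg lam, sq_nonneg ((n:ℝ)+1)]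
    have slam : Summable (fun (n : ℕ) => lam^2 * (a n * y ^ n)) := sUy.mul_left _
    have e3 : (∑' (n : ℕ), (n:ℝ) * ((n-1:ℕ):ℝ) * a n * y ^ (n-2)) =
        ∑' (n : ℕ), ((n:ℝ)^2 - lam^2) * (a n * y ^ n) := by
      rw [sF2.tsum_eq_zero_add, ((summable_nat_add_iff 1).2 sF2).tsum_eq_zero_add]
      norm_num
      apply tsum_congr
      intro n
      have e2 : n + 1 + 1 - 2 = n := by omega
      rw [e2, show n + 1 + 1 = n + 2 from by omega, hrec n]
      have hne : ((n:ℝ)+2) * ((n:ℝ)+1) ≠ 0 := by positivity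
      field_simp
      ring
    have e1 : y * (∑' (n : ℕ), (n:ℝ) * a n * y ^ (n-1)) =
        ∑' (n : ℕ), (n:ℝ) * (a n * y ^ n) := by
      rw [← tsum_mul_left]
      apply tsum_congr
      intro n
      rcases n with _ | m
      · simp
      · have e : m + 1 - 1 = m := by omega
        rw [e]
        ring
    have e2 : y^2 * (∑' (n : ℕ), (n:ℝ) * ((n-1:ℕ):ℝ) * a n * y ^ (n-2)) =
        ∑' (n : ℕ), ((n:ℝ) * ((n-1:ℕ):ℝ)) * (a n * y ^ n) := by
      rw [← tsum_mul_left]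
      apply tsum_congr
      intro n
      rcases n with _ | m
      · simp
      · rcases m with _ | k
        · simp
        · have e : k + 1 + 1 - 2 = k := by omega
          have e' : k + 1 + 1 - 1 = k + 1 := by omega
          rw [e, e']
          push_cast
          ring
    rw [eq_div_iff (ne_of_gt hy2)]
    calc (∑' (n : ℕ), (n:ℝ) * ((n-1:ℕ):ℝ) * a n * y ^ (n-2)) * (1 - y^2)
        = (∑' (n : ℕ), (n:ℝ) * ((n-1:ℕ):ℝ) * a n * y ^ (n-2))
          - y^2 * (∑' (n : ℕ), (n:ℝ) * ((n-1:ℕ):ℝ) * a n * y ^ (n-2)) := by ring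
      _ = (∑' (n : ℕ), ((n:ℝ)^2 - lam^2) * (a n * y ^ n))
          - ∑' (n : ℕ), ((n:ℝ) * ((n-1:ℕ):ℝ)) * (a n * y ^ n) := by rw [e2, e3]
      _ = ∑' (n : ℕ), (((n:ℝ)^2 - lam^2) * (a n * y ^ n)
          - ((n:ℝ) * ((n-1:ℕ):ℝ)) * (a n * y ^ n)) := (Summable.tsum_sub sA s2).symm
      _ = ∑' (n : ℕ), ((n:ℝ) * (a n * y ^ n) - lam^2 * (a n * y ^ n)) := by
          apply tsum_congr
          intro n
          rcases n with _ | m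
          · simp
          · have e : m + 1 - 1 = m := by omega
            rw [e]
            push_cast
            ring
      _ = (∑' (n : ℕ), (n:ℝ) * (a n * y ^ n)) - ∑' (n : ℕ), lam^2 * (a n * y ^ n) :=
          Summable.tsum_sub s1 slam
      _ = y * (∑' (n : ℕ), (n:ℝ) * a n * y ^ (n-1))
          - lam^2 * (∑' (n : ℕ), a n * y ^ n) := by rw [e1, tsum_mul_left]
  have hGderiv' : ∀ y ∈ Set.Ioo (-r) r,
      HasDerivAt (fun z => ∑' (n : ℕ), (n:ℝ) * a n * z ^ (n-1))
      ((y * (∑' (n : ℕ), (n:ℝ) * a n * y ^ (n-1)) -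
        lam^2 * (∑' (n : ℕ), a n * y ^ n)) / (1 - y^2)) y := by
    intro y hy
    rw [← hkey y hy]
    exact hGderiv y hy
  -- derivative facts for sin (lam * arcsin)
  have hVd : ∀ y ∈ Set.Ioo (-r) r,
      HasDerivAt (fun z => Real.sin (lam * Real.arcsin z))
        (lam * (Real.cos (lam * Real.arcsin y) * (Real.sqrt (1 - y^2))⁻¹)) y := by
    intro y hy
    have hy1 : -1 < y := by have := hy.1; linarith
    have hyu : y < 1 := lt_trans hy.2 hr1
    have hpos : (0:ℝ) < 1 - y^2 := by nlinarith
    have hs0 : (0:ℝ) < Real.sqrt (1 - y^2) := Real.sqrt_pos.2 hpos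
    have harc : HasDerivAt (fun z => lam * Real.arcsin z)
        (lam * (1 / Real.sqrt (1 - y^2))) y :=
      (Real.hasDerivAt_arcsin (by linarith) (by linarith)).const_mul lam
    have h := harc.sin
    convert h using 1
    rw [one_div]
    ring
  have hWd : ∀ y ∈ Set.Ioo (-r) r,
      HasDerivAt (fun z => lam * (Real.cos (lam * Real.arcsin z) * (Real.sqrt (1 - z^2))⁻¹))
        ((y * (lam * (Real.cos (lam * Real.arcsin y) * (Real.sqrt (1 - y^2))⁻¹)) -
          lam^2 * Real.sin (lam * Real.arcsin y)) / (1 - y^2)) y := by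
    intro y hy
    have hy1 : -1 < y := by have := hy.1; linarith
    have hyu : y < 1 := lt_trans hy.2 hr1
    have hpos : (0:ℝ) < 1 - y^2 := by nlinarith
    have hs0 : (0:ℝ) < Real.sqrt (1 - y^2) := Real.sqrt_pos.2 hpos
    have harc : HasDerivAt (fun z => lam * Real.arcsin z)
        (lam * (1 / Real.sqrt (1 - y^2))) y :=
      (Real.hasDerivAt_arcsin (by linarith) (by linarith)).const_mul lam
    have hsq : HasDerivAt (fun z : ℝ => 1 - z^2) (-(2*y)) y := by
      have := (hasDerivAt_pow 2 y).const_sub 1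
      refine this.congr_deriv ?_
      norm_num
    have hsqrt : HasDerivAt (fun z : ℝ => Real.sqrt (1 - z^2)) (-y / Real.sqrt (1 - y^2)) y := by
      have := (Real.hasDerivAt_sqrt (ne_of_gt hpos)).comp y hsq
      refine this.congr_deriv ?_
      field_simp
    have hinv : HasDerivAt (fun z : ℝ => (Real.sqrt (1 - z^2))⁻¹)
        (-(-y / Real.sqrt (1 - y^2)) / (Real.sqrt (1 - y^2))^2) y := hsqrt.inv (ne_of_gt hs0)
    have hcos : HasDerivAt (fun z => Real.cos (lam * Real.arcsin z))
        (-Real.sin (lam * Real.arcsin y) * (lam * (1 / Real.sqrt (1 - y^2)))) y := harc.cos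
    have hprod := (hcos.mul hinv).const_mul lam
    refine hprod.congr_deriv ?_
    have hss : Real.sqrt (1 - y^2) ^ 2 = 1 - y^2 := Real.sq_sqrt hpos.le
    rw [← hss]
    have hsne : Real.sqrt (1 - y^2) ≠ 0 := ne_of_gt hs0
    field_simp
    rw [Real.sqrt_sq hs0.le]
    ring
  -- the vector field
  have hr2 : (0:ℝ) < 1 - r^2 := by nlinarith
  set Fv : ℝ → ℝ × ℝ → ℝ × ℝ := fun t z =>
    (z.2, ((max (-r) (min r t)) * z.2 - lam^2 * z.1) / (1 - (max (-r) (min r t))^2)) with hFv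
  set Kr : ℝ := max 1 ((r + lam^2) / (1 - r^2)) with hKr
  have hKr0 : 0 ≤ Kr := le_trans zero_le_one (le_max_left _ _)
  set K : NNReal := Real.toNNReal Kr with hK
  have hKval : (K:ℝ) = Kr := Real.coe_toNNReal _ hKr0
  have hK1 : (1:ℝ) ≤ (K:ℝ) := by rw [hKval]; exact le_max_left _ _
  have hK2 : (r + lam^2)/(1-r^2) ≤ (K:ℝ) := by rw [hKval]; exact le_max_right _ _
  have hlip : ∀ t, LipschitzOnWith K (Fv t) Set.univ := by
    intro t
    apply LipschitzWith.lipschitzOnWith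
    rw [lipschitzWith_iff_dist_le_mul]
    intro z w
    set c : ℝ := max (-r) (min r t) with hc
    have hcabs : |c| ≤ r := by
      rw [abs_le]
      exact ⟨le_max_left _ _, max_le (by linarith) (min_le_left _ _)⟩
    have hcsq : c^2 ≤ r^2 := by
      have h := abs_le.1 hcabs
      nlinarith
    have hden : 1 - r^2 ≤ 1 - c^2 := by linarith
    have hdenpos : (0:ℝ) < 1 - c^2 := lt_of_lt_of_le hr2 hden
    have hm0 : (0:ℝ) ≤ max |z.1 - w.1| |z.2 - w.2| :=
      le_trans (abs_nonneg _) (le_max_left _ _)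
    have hdz : dist z w = max |z.1 - w.1| |z.2 - w.2| := by
      rw [Prod.dist_eq, Real.dist_eq, Real.dist_eq]
    have hdF : dist (Fv t z) (Fv t w) =
        max |z.2 - w.2| |(c * z.2 - lam^2 * z.1) / (1 - c^2)
          - (c * w.2 - lam^2 * w.1) / (1 - c^2)| := by
      rw [Prod.dist_eq, Real.dist_eq, Real.dist_eq]
    rw [hdz, hdF]
    apply max_le
    · calc |z.2 - w.2| ≤ max |z.1 - w.1| |z.2 - w.2| := le_max_right _ _
        _ ≤ (K:ℝ) * max |z.1 - w.1| |z.2 - w.2| := le_mul_of_one_le_left hm0 hK1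
    · have heq : (c * z.2 - lam^2 * z.1) / (1 - c^2) - (c * w.2 - lam^2 * w.1) / (1 - c^2)
          = (c * (z.2 - w.2) - lam^2 * (z.1 - w.1)) / (1 - c^2) := by
        field_simp
        ring
      rw [heq, abs_div, abs_of_pos hdenpos]
      have hnum : |c * (z.2 - w.2) - lam^2 * (z.1 - w.1)|
          ≤ r * |z.2 - w.2| + lam^2 * |z.1 - w.1| := by
        calc |c * (z.2 - w.2) - lam^2 * (z.1 - w.1)|
            ≤ |c * (z.2 - w.2)| + |lam^2 * (z.1 - w.1)| := abs_sub _ _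
          _ ≤ r * |z.2 - w.2| + lam^2 * |z.1 - w.1| := by
              rw [abs_mul, abs_mul, abs_of_nonneg (sq_nonneg lam)]
              exact add_le_add (mul_le_mul_of_nonneg_right hcabs (abs_nonneg _)) le_rfl
      calc |c * (z.2 - w.2) - lam^2 * (z.1 - w.1)| / (1 - c^2)
          ≤ (r * |z.2 - w.2| + lam^2 * |z.1 - w.1|) / (1 - r^2) := by
            apply div_le_div₀ _ hnum hr2 hden
            positivity
        _ ≤ (r * max |z.1 - w.1| |z.2 - w.2| + lam^2 * max |z.1 - w.1| |z.2 - w.2|) / (1 - r^2) := by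
            gcongr
            · exact le_max_right _ _
            · exact le_max_left _ _
        _ = ((r + lam^2)/(1 - r^2)) * max |z.1 - w.1| |z.2 - w.2| := by ring
        _ ≤ (K:ℝ) * max |z.1 - w.1| |z.2 - w.2| := mul_le_mul_of_nonneg_right hK2 hm0
  -- the two solutions
  set uf : ℝ → ℝ × ℝ := fun t =>
    ((∑' (n : ℕ), a n * t ^ n), (∑' (n : ℕ), (n:ℝ) * a n * t ^ (n-1))) with huf
  set vg : ℝ → ℝ × ℝ := fun t =>
    (Real.sin (lam * Real.arcsin t),
      lam * (Real.cos (lam * Real.arcsin t) * (Real.sqrt (1 - t^2))⁻¹)) with hvg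
  have hclamp : ∀ t ∈ Set.Ioo (-r) r, max (-r) (min r t) = t := by
    intro t ht
    rw [min_eq_right ht.2.le, max_eq_right ht.1.le]
  have hfode : ∀ t ∈ Set.Ioo (-r) r, HasDerivAt uf (Fv t (uf t)) t ∧ uf t ∈ Set.univ := by
    intro t ht
    refine ⟨?_, trivial⟩
    have h := (hUderiv t ht).prodMk (hGderiv' t ht)
    refine h.congr_deriv ?_
    simp only [hFv, huf]
    rw [hclamp t ht]
  have hgode : ∀ t ∈ Set.Ioo (-r) r, HasDerivAt vg (Fv t (vg t)) t ∧ vg t ∈ Set.univ := by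
    intro t ht
    refine ⟨?_, trivial⟩
    have h := (hVd t ht).prodMk (hWd t ht)
    refine h.congr_deriv ?_
    simp only [hFv, hvg]
    rw [hclamp t ht]
  have heq0 : uf 0 = vg 0 := by
    have hU0 : (∑' (n : ℕ), a n * (0:ℝ) ^ n) = 0 := by
      rw [tsum_eq_single 0 (fun b hb => by simp [zero_pow hb])]
      simp [h0]
    have hG0 : (∑' (n : ℕ), (n:ℝ) * a n * (0:ℝ) ^ (n-1)) = lam := by
      rw [tsum_eq_single 1 ?_]
      · simp [h1]
      · intro b hb
        rcases b with _ | m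
        · simp
        · have hm : m ≠ 0 := by omega
          have e : m + 1 - 1 = m := by omega
          rw [e]
          simp [zero_pow hm]
    simp only [huf, hvg, hU0, hG0]
    norm_num
  have hxI : x ∈ Set.Ioo (-r) r := abs_lt.1 hxr
  have hfinal := ODE_solution_unique_of_mem_Ioo (fun t _ => hlip t) h0mem hfode hgode heq0 hxI
  have hfst : (∑' (n : ℕ), a n * x ^ n) = Real.sin (lam * Real.arcsin x) := by
    have := congrArg Prod.fst hfinal
    simpa [huf, hvg] using this
  have hsum := (sumU x hxr.le).hasSum
  rwa [hfst] at hsum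
end
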